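/- arXiv:2211.09026 — 13 statements merged into one kernel-verified Lean document; each statement's English description precedes it below -/
import Mathlib

section
/- Let L be an ω-Lie algebra over ℂ and let K = H ⊕ ℂx be a subspace of L such that [h,h']=0 for all h,h'∈H, [x,h]=h for all h∈H, and ω(k,w)=0 for all k∈K and w∈L. Then for every h∈H the linear map ad(h): L→L, z ↦ [h,z], is a nilpotent endomorphism of L. -/
/-- If `K = H ⊕ ℂx` is a subspace of an ω-Lie algebra `L` over ℂ with
`H` abelian, `[x,h] = h` for all `h ∈ H`, and `ω(k,·) = 0` for all `k ∈ K`, then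
for every `h ∈ H` the adjoint map `ad h : L → L` is nilpotent. -/
theorem stmt_1
    (L : Type*) [AddCommGroup L] [Module ℂ L] [FiniteDimensional ℂ L]
    (br : L →ₗ[ℂ] L →ₗ[ℂ] L) (ω : L →ₗ[ℂ] L →ₗ[ℂ] ℂ)
    (hskew : ∀ u v : L, ω u v = -ω v u)
    (hanti : ∀ u v : L, br u v = -br v u)
    (hjac : ∀ u v w : L, br (br u v) w + br (br v w) u + br (br w u) v
      = ω u v • w + ω v w • u + ω w u • v)
    (H : Submodule ℂ L) (x : L)
    (hxH : x ∉ H)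
    (habH : ∀ h ∈ H, ∀ h' ∈ H, br h h' = 0)
    (hxh : ∀ h ∈ H, br x h = h)
    (hωH : ∀ h ∈ H, ∀ w : L, ω h w = 0)
    (hωx : ∀ w : L, ω x w = 0) :
    ∀ h ∈ H, IsNilpotent (br h : Module.End ℂ L) := by
  intro h hH
  set A : Module.End ℂ L := br x with hA
  set N : Module.End ℂ L := br h with hN
  -- Key commutation relation: A * N - N * A = N
  have key : A * N - N * A = N := by
    ext z
    have j := hjac x h z
    rw [hωx h, hωH h hH z, hskew z x, hωx z] at j
    simp only [zero_smul, neg_zero, add_zero, zero_add] at j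
    have e1 : br (br x h) z = br h z := by rw [hxh h hH]
    have e2 : br (br h z) x = - br x (br h z) := hanti _ _
    have e3 : br (br z x) h = br h (br x z) := by
      rw [hanti z x, map_neg, LinearMap.neg_apply, hanti (br x z) h, neg_neg]
    rw [e1, e2, e3] at j
    simp only [LinearMap.sub_apply, Module.End.mul_apply, ← hA, ← hN] at j ⊢
    linear_combination (norm := module) -j
  -- The commutator operator D on End ℂ L
  set D : Module.End ℂ (Module.End ℂ L) :=
    LinearMap.mulLeft ℂ A - LinearMap.mulRight ℂ A with hD
  have hDmul : ∀ M : Module.End ℂ L, D (M * N) = D M * N + M * N := by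
    intro M
    have : A * (M * N) - M * N * A = (A * M - M * A) * N + M * (A * N - N * A) := by
      noncomm_ring
    simp only [hD, LinearMap.sub_apply, LinearMap.mulLeft_apply, LinearMap.mulRight_apply,
      this, key]
  have hDpow : ∀ k : ℕ, D (N ^ (k + 1)) = ((k : ℂ) + 1) • N ^ (k + 1) := by
    intro k
    induction k with
    | zero =>
      simp only [pow_one, hD, LinearMap.sub_apply, LinearMap.mulLeft_apply,
        LinearMap.mulRight_apply, Nat.cast_zero, zero_add, one_smul]
      exact key
    | succ k ih =>
      have h2 : N ^ (k + 2) = N ^ (k + 1) * N := by rw [pow_succ]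
      rw [h2, hDmul, ih, smul_mul_assoc, ← pow_succ]
      push_cast
      module
  by_contra hnil
  have hpow_ne : ∀ k : ℕ, N ^ (k + 1) ≠ 0 := fun k hk => hnil ⟨k + 1, hk⟩
  set d := Module.finrank ℂ (Module.End ℂ L) with hd
  have hev : ∀ i : Fin (d + 1), D.HasEigenvector ((i : ℕ) + 1 : ℂ) (N ^ ((i : ℕ) + 1)) := by
    intro i
    refine ⟨?_, hpow_ne i⟩
    rw [Module.End.mem_eigenspace_iff]
    exact hDpow i
  have hinj : Function.Injective (fun i : Fin (d + 1) => ((i : ℕ) + 1 : ℂ)) := by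
    intro a b hab
    simp only [add_left_inj, Nat.cast_inj] at hab
    exact Fin.ext hab
  have hli := D.eigenvectors_linearIndependent' _ hinj _ hev
  have hcard := hli.fintype_card_le_finrank
  simp [hd] at hcard
end

section
/- Let L be a nontrivial ω-Lie algebra over ℂ with dim L ≥ 5, of the form L = H ⊕ ℂx ⊕ ℂv (direct sum of subspaces) where [h,h']=0 for all h,h'∈H, [x,h]∈H for all h∈H, ω(h,w)=0 for all h∈H and w∈L, and ω(x,v)=1. Then for every h∈H the bracket [v,h] lies in H ⊕ ℂx, i.e. its ℂv-component is zero. -/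
open Submodule in
theorem stmt2_aux_dual {L : Type*} [AddCommGroup L] [Module ℂ L]
    (M : Submodule ℂ L) (v : L) (hv : v ∉ M)
    (htop : M ⊔ Submodule.span ℂ {v} = ⊤) :
    ∃ T : L →ₗ[ℂ] ℂ, (∀ m ∈ M, T m = 0) ∧ T v = 1 := by
  have hvq : M.mkQ v ≠ 0 := by
    simpa [Submodule.Quotient.mk_eq_zero] using hv
  have hspan : Submodule.span ℂ {M.mkQ v} = ⊤ := by
    have h0 := congrArg (Submodule.map M.mkQ) htop
    rw [Submodule.map_sup, Submodule.map_span, Set.image_singleton, Submodule.map_top,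
      Submodule.range_mkQ] at h0
    have h2 : Submodule.map M.mkQ M = ⊥ := by
      rw [Submodule.eq_bot_iff]
      rintro y ⟨m, hm, rfl⟩
      simpa [Submodule.Quotient.mk_eq_zero] using hm
    rwa [h2, bot_sup_eq] at h0
  have hli : LinearIndependent ℂ (fun _ : Unit => M.mkQ v) :=
    LinearIndependent.of_subsingleton () hvq
  let b : Module.Basis Unit ℂ (L ⧸ M) := Module.Basis.mk hli (by
    rw [Set.range_const, hspan])
  refine ⟨(b.coord ()).comp M.mkQ, ?_, ?_⟩
  · intro m hm
    have : M.mkQ m = 0 := by simpa [Submodule.Quotient.mk_eq_zero] using hm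
    simp [this]
  · have hb : b () = M.mkQ v := Module.Basis.mk_apply hli _ ()
    simp only [LinearMap.comp_apply, ← hb, Module.Basis.coord_apply, Module.Basis.repr_self]
    simp

/-- Let `L = H ⊕ ℂx ⊕ ℂv` be a nontrivial ω-Lie algebra over ℂ of
dimension ≥ 5 with `H` abelian, `[x,H] ⊆ H`, `ω(H,·) = 0` and `ω(x,v) = 1`. Then
for every `h ∈ H` the bracket `[v,h]` lies in `H ⊕ ℂx` (its `ℂv`-component vanishes). -/
theorem stmt_2
    (L : Type*) [AddCommGroup L] [Module ℂ L] [FiniteDimensional ℂ L]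
    (br : L →ₗ[ℂ] L →ₗ[ℂ] L) (ω : L →ₗ[ℂ] L →ₗ[ℂ] ℂ)
    (hskew : ∀ u v : L, ω u v = -ω v u)
    (hanti : ∀ u v : L, br u v = -br v u)
    (hjac : ∀ u v w : L, br (br u v) w + br (br v w) u + br (br w u) v
      = ω u v • w + ω v w • u + ω w u • v)
    (hnt : ∃ u w : L, ω u w ≠ 0)
    (hdim : 5 ≤ Module.finrank ℂ L)
    (H : Submodule ℂ L) (x v : L)
    (hspan : ∀ z : L, ∃ h ∈ H, ∃ s t : ℂ, z = h + s • x + t • v)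
    (hxH : x ∉ H)
    (hvH : v ∉ H ⊔ Submodule.span ℂ {x})
    (habH : ∀ h ∈ H, ∀ h' ∈ H, br h h' = 0)
    (hxh : ∀ h ∈ H, br x h ∈ H)
    (hωH : ∀ h ∈ H, ∀ w : L, ω h w = 0)
    (hωxv : ω x v = 1) :
    ∀ h ∈ H, br v h ∈ H ⊔ Submodule.span ℂ {x} := by
  classical
  set M : Submodule ℂ L := H ⊔ Submodule.span ℂ {x} with hM
  set M' : Submodule ℂ L := H ⊔ Submodule.span ℂ {v} with hM'
  have hHM : H ≤ M := le_sup_left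
  have hxMem : x ∈ M := Submodule.mem_sup_right (Submodule.mem_span_singleton_self x)
  have hHM' : H ≤ M' := le_sup_left
  have hvMem : v ∈ M' := Submodule.mem_sup_right (Submodule.mem_span_singleton_self v)
  -- top decompositions
  have htop : M ⊔ Submodule.span ℂ {v} = ⊤ := by
    rw [eq_top_iff]
    intro z _
    obtain ⟨h, hh, s, t, rfl⟩ := hspan z
    exact add_mem (add_mem (Submodule.mem_sup_left (hHM hh))
      (Submodule.mem_sup_left (Submodule.smul_mem _ _ hxMem)))
      (Submodule.mem_sup_right (Submodule.smul_mem _ _ (Submodule.mem_span_singleton_self v)))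
  have htop' : M' ⊔ Submodule.span ℂ {x} = ⊤ := by
    rw [eq_top_iff]
    intro z _
    obtain ⟨h, hh, s, t, rfl⟩ := hspan z
    exact add_mem (add_mem (Submodule.mem_sup_left (hHM' hh))
      (Submodule.mem_sup_right (Submodule.smul_mem _ _ (Submodule.mem_span_singleton_self x))))
      (Submodule.mem_sup_left (Submodule.smul_mem _ _ hvMem))
  -- x ∉ M'
  have hxM' : x ∉ M' := by
    intro hx
    rw [hM', Submodule.mem_sup] at hx
    obtain ⟨h, hh, w, hw, hxe⟩ := hx
    rw [Submodule.mem_span_singleton] at hw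
    obtain ⟨c, rfl⟩ := hw
    by_cases hc : c = 0
    · apply hxH
      subst hc
      simp only [zero_smul, add_zero] at hxe
      exact hxe ▸ hh
    · apply hvH
      have hveq : v = c⁻¹ • (x - h) := by
        rw [← hxe]
        rw [add_sub_cancel_left, smul_smul, inv_mul_cancel₀ hc, one_smul]
      rw [hveq]
      exact Submodule.smul_mem _ _ (sub_mem
        (Submodule.mem_sup_right (Submodule.mem_span_singleton_self x))
        (Submodule.mem_sup_left hh))
  -- the coefficient functionals
  obtain ⟨T, hT0, hTv⟩ := stmt2_aux_dual M v hvH htop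
  obtain ⟨S, hS0, hSx⟩ := stmt2_aux_dual M' x hxM' htop'
  have hTH : ∀ h ∈ H, T h = 0 := fun h hh => hT0 _ (hHM hh)
  have hTx : T x = 0 := hT0 _ hxMem
  have hSH : ∀ h ∈ H, S h = 0 := fun h hh => hS0 _ (hHM' hh)
  have hSv : S v = 0 := hS0 _ hvMem
  -- decomposition: H-component
  have key : ∀ z : L, z - S z • x - T z • v ∈ H := by
    intro z
    obtain ⟨h, hh, s, t, hz⟩ := hspan z
    have hTz : T z = t := by
      rw [hz]
      simp [map_add, map_smul, hTH h hh, hTx, hTv]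
    have hSz : S z = s := by
      rw [hz]
      simp [map_add, map_smul, hSH h hh, hSx, hSv]
    rw [hTz, hSz, hz]
    have he : h + s • x + t • v - s • x - t • v = h := by module
    rwa [he]
  have hbrxx : br x x = 0 := by
    have h1 : br x x + br x x = 0 := by
      nth_rewrite 2 [hanti x x]
      simp
    have h2 : (2 : ℂ) • br x x = 0 := by rw [two_smul]; exact h1
    simpa using h2
  -- expansion of brackets against H
  have expand : ∀ w : L, ∀ h' ∈ H, br w h' = S w • br x h' + T w • br v h' := by
    intro w h' hh'
    have h0 : br (w - S w • x - T w • v) h' = 0 := habH _ (key w) h' hh'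
    have h1 : br w h' = br (w - S w • x - T w • v) h' + S w • br x h' + T w • br v h' := by
      simp only [map_sub, map_smul, LinearMap.sub_apply, LinearMap.smul_apply]
      abel
    rw [h1, h0, zero_add]
  -- expansion of br x w
  have expandx : ∀ w : L, br x w = br x (w - S w • x - T w • v) + T w • br x v := by
    intro w
    simp only [map_sub, map_smul, hbrxx, smul_zero]
    abel
  have hTbx : ∀ w : L, T (br x w) = T w * T (br x v) := by
    intro w
    rw [expandx w, map_add, map_smul, hTH _ (hxh _ (key w)), zero_add, smul_eq_mul]
  have hSbx : ∀ w : L, S (br x w) = T w * S (br x v) := by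
    intro w
    rw [expandx w, map_add, map_smul, hSH _ (hxh _ (key w)), zero_add, smul_eq_mul]
  -- ω simplifications
  have hωxh : ∀ h ∈ H, ω x h = 0 := by
    intro h hh
    rw [hskew, hωH h hh x, neg_zero]
  have hωvx : ω v x = -1 := by rw [hskew, hωxv]
  have hωvh : ∀ h ∈ H, ω v h = 0 := by
    intro h hh
    rw [hskew, hωH h hh v, neg_zero]
  -- Equation A
  have eqA : ∀ h ∈ H, ∀ h' ∈ H,
      S (br v h) • br x h' + T (br v h) • br v h'
        = S (br v h') • br x h + T (br v h') • br v h := by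
    intro h hh h' hh'
    have hj := hjac h h' v
    rw [habH h hh h' hh', hωH h hh h', hωH h' hh' v, hωvh h hh] at hj
    rw [hanti h' v] at hj
    simp only [map_zero, LinearMap.zero_apply, map_neg, LinearMap.neg_apply, zero_smul,
      zero_add, add_zero] at hj
    have hj2 : br (br v h) h' = br (br v h') h := by
      rw [← sub_eq_zero] at hj ⊢
      rw [← hj]
      module
    rw [expand (br v h) h' hh', expand (br v h') h hh] at hj2
    exact hj2
  -- Equation star
  have star : ∀ h ∈ H,
      br x (br v h) - br v (br x h) - S (br x v) • br x h - T (br x v) • br v h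
        = (-1 : ℂ) • h := by
    intro h hh
    have hj := hjac x h v
    rw [hωxh h hh, hωH h hh v, hωvx] at hj
    rw [hanti (br x h) v, hanti h v, hanti v x] at hj
    simp only [map_neg, LinearMap.neg_apply, zero_smul, zero_add, add_zero] at hj
    rw [hanti (br v h) x] at hj
    rw [expand (br x v) h hh] at hj
    rw [← sub_eq_zero] at hj ⊢
    rw [← hj]
    module
  -- reduce to vanishing of the v-coefficient
  suffices hT : ∀ h ∈ H, T (br v h) = 0 by
    intro h hh
    have hk := key (br v h)
    have hrw : br v h = (br v h - S (br v h) • x - T (br v h) • v) + S (br v h) • x := by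
      rw [hT h hh]; module
    rw [hrw]
    exact add_mem (hHM hk) (Submodule.smul_mem _ _ hxMem)
  by_contra hcon
  push_neg at hcon
  obtain ⟨h₀, hh₀, ht₀⟩ := hcon
  set t₀ := T (br v h₀) with ht₀def
  set s₀ := S (br v h₀) with hs₀def
  set p := S (br x v) with hpdef
  set q := T (br x v) with hqdef
  set σ := s₀ / t₀ with hσdef
  -- the x-coefficient is proportional to the v-coefficient
  have hAx : ∀ h' ∈ H, S (br v h') = T (br v h') * σ := by
    intro h' hh'
    have h1 := congrArg S (eqA h₀ hh₀ h' hh')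
    simp only [map_add, map_smul, smul_eq_mul] at h1
    rw [hSbx h', hSbx h₀, hTH h' hh', hTH h₀ hh₀] at h1
    rw [hσdef]
    field_simp
    linear_combination h1
  -- B-v : T (br v (br x h)) = 0
  have hBv : ∀ h ∈ H, T (br v (br x h)) = 0 := by
    intro h hh
    have h1 := congrArg T (star h hh)
    simp only [map_sub, map_smul, smul_eq_mul, neg_mul, neg_smul, one_smul, map_neg] at h1
    rw [hTbx (br v h), hTbx h, hTH h hh] at h1
    linear_combination -h1
  -- p = q * σ
  have hpq : p = q * σ := by
    have h1 := congrArg S (star h₀ hh₀)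
    simp only [map_sub, map_smul, smul_eq_mul, neg_mul, neg_smul, one_smul, map_neg] at h1
    rw [hSbx (br v h₀), hSbx h₀, hTH h₀ hh₀, hSH h₀ hh₀] at h1
    have hz : S (br v (br x h₀)) = 0 := by
      rw [hAx (br x h₀) (hxh h₀ hh₀), hBv h₀ hh₀, zero_mul]
    rw [hz] at h1
    rw [hσdef]
    field_simp
    linear_combination h1
  -- find a nonzero h' ∈ H with T (br v h') = 0
  have hxne : x ≠ 0 := fun hz => hxH (hz ▸ H.zero_mem)
  have hvne : v ≠ 0 := fun hz => hvH (hz ▸ M.zero_mem)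
  have hHdim : 3 ≤ Module.finrank ℂ H := by
    have e1 : Module.finrank ℂ ↥(M ⊔ Submodule.span ℂ {v}) = Module.finrank ℂ L := by
      rw [htop]; exact finrank_top ℂ L
    have e2 := Submodule.finrank_sup_add_finrank_inf_eq M (Submodule.span ℂ {v})
    have e3 := Submodule.finrank_sup_add_finrank_inf_eq H (Submodule.span ℂ {x})
    have e4 : Module.finrank ℂ ↥(Submodule.span ℂ {x}) = 1 := finrank_span_singleton hxne
    have e5 : Module.finrank ℂ ↥(Submodule.span ℂ {v}) = 1 := finrank_span_singleton hvne
    rw [← hM] at e3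
    rw [e4] at e3
    rw [e5, e1] at e2
    omega
  let f : ↥H →ₗ[ℂ] ℂ := (T ∘ₗ br v) ∘ₗ H.subtype
  have hker : 0 < Module.finrank ℂ (LinearMap.ker f) := by
    have h1 := LinearMap.finrank_range_add_finrank_ker f
    have h2 : Module.finrank ℂ (LinearMap.range f) ≤ 1 := by
      have h3 := Submodule.finrank_le (LinearMap.range f)
      simpa using h3
    omega
  haveI hntk : Nontrivial (LinearMap.ker f) := Module.finrank_pos_iff.mp hker
  obtain ⟨k, hk⟩ := exists_ne (0 : LinearMap.ker f)
  set h' : L := ((k : ↥H) : L) with hh'def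
  have hh' : h' ∈ H := (k : ↥H).2
  have ht' : T (br v h') = 0 := by
    have h1 := k.2
    rw [LinearMap.mem_ker] at h1
    exact h1
  have hne : h' ≠ 0 := by
    intro hz
    exact hk (Subtype.ext (Subtype.ext hz))
  have hs' : S (br v h') = 0 := by rw [hAx h' hh', ht', zero_mul]
  -- the two proportionality equations
  have e1 : br v h' = -σ • br x h' := by
    have h1 := eqA h₀ hh₀ h' hh'
    rw [hs', ht'] at h1
    have h2 : t₀ • br v h' = -s₀ • br x h' := by
      have h3 : s₀ • br x h' + t₀ • br v h' = 0 := by rw [h1]; module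
      calc t₀ • br v h' = (s₀ • br x h' + t₀ • br v h') - s₀ • br x h' := by module
        _ = -s₀ • br x h' := by rw [h3]; module
    apply smul_right_injective L ht₀
    show t₀ • br v h' = t₀ • (-σ • br x h')
    rw [h2, smul_smul, hσdef]
    match_scalars
    field_simp
  have hw' : br x h' ∈ H := hxh h' hh'
  have ht'' : T (br v (br x h')) = 0 := hBv h' hh'
  have hs'' : S (br v (br x h')) = 0 := by rw [hAx (br x h') hw', ht'', zero_mul]
  have e2 : br v (br x h') = -σ • br x (br x h') := by
    have h1 := eqA h₀ hh₀ (br x h') hw'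
    rw [hs'', ht''] at h1
    have h2 : t₀ • br v (br x h') = -s₀ • br x (br x h') := by
      have h3 : s₀ • br x (br x h') + t₀ • br v (br x h') = 0 := by rw [h1]; module
      calc t₀ • br v (br x h')
          = (s₀ • br x (br x h') + t₀ • br v (br x h')) - s₀ • br x (br x h') := by module
        _ = -s₀ • br x (br x h') := by rw [h3]; module
    apply smul_right_injective L ht₀
    show t₀ • br v (br x h') = t₀ • (-σ • br x (br x h'))
    rw [h2, smul_smul, hσdef]
    match_scalars
    field_simp
  -- final contradiction via the star equation at h'
  have st := star h' hh'
  rw [e1, map_smul, e2, hpq] at st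
  have hz : (-1 : ℂ) • h' = 0 := by
    rw [← st]; module
  apply hne
  simpa using hz
end

section
/- Let H be a finite-dimensional complex vector space, let f, g: H → H be linear maps, and let h₁ ∈ H. Define L = H ⊕ ℂx ⊕ ℂv with the antisymmetric bilinear bracket determined by [h,h']=0 for h,h'∈H, [x,h]=f(h), [v,h]=g(h), [x,v]=h₁+x, and the skew-symmetric bilinear form ω determined by ω(x,v)=1 and ω(h,w)=0 for all h∈H, w∈L, ω(x,x)=ω(v,v)=0. Then L is an ω-Lie algebra if and only if f(h) − f(g(h)) + g(f(h)) = h for all h ∈ H; equivalently, if A and B denote the endomorphisms f and g, [A − id, B] = A − id. -/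
/-- The NP₁-type construction. With `L = H ⊕ ℂx ⊕ ℂv`, `H` abelian,
`[x,h] = f(h)`, `[v,h] = g(h)`, `[x,v] = h₁ + x`, `ω(H,·) = 0` and `ω(x,v) = 1`
(bracket antisymmetric bilinear, ω skew-symmetric bilinear), `L` is an ω-Lie algebra
(i.e. the ω-Jacobi identity holds for all triples) if and only if
`f(h) − f(g(h)) + g(f(h)) = h` for all `h ∈ H`; equivalently, with `A = f`, `B = g`,
`[A − id, B] = A − id` on `H`. -/
theorem stmt_3
    (L : Type*) [AddCommGroup L] [Module ℂ L] [FiniteDimensional ℂ L]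
    (br : L →ₗ[ℂ] L →ₗ[ℂ] L) (ω : L →ₗ[ℂ] L →ₗ[ℂ] ℂ)
    (hskew : ∀ u v : L, ω u v = -ω v u)
    (hanti : ∀ u v : L, br u v = -br v u)
    (H : Submodule ℂ L) (x v : L) (f g : L →ₗ[ℂ] L) (h₁ : L)
    (hf : ∀ h ∈ H, f h ∈ H) (hg : ∀ h ∈ H, g h ∈ H) (hh₁ : h₁ ∈ H)
    (hspan : ∀ z : L, ∃ h ∈ H, ∃ s t : ℂ, z = h + s • x + t • v)
    (hxH : x ∉ H)
    (hvH : v ∉ H ⊔ Submodule.span ℂ {x})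
    (habH : ∀ h ∈ H, ∀ h' ∈ H, br h h' = 0)
    (hbx : ∀ h ∈ H, br x h = f h)
    (hbv : ∀ h ∈ H, br v h = g h)
    (hbxv : br x v = h₁ + x)
    (hωH : ∀ h ∈ H, ∀ w : L, ω h w = 0)
    (hωxv : ω x v = 1) :
    ((∀ u w z : L, br (br u w) z + br (br w z) u + br (br z u) w
        = ω u w • z + ω w z • u + ω z u • w) ↔
      (∀ h ∈ H, f h - f (g h) + g (f h) = h)) ∧
    ((∀ h ∈ H, f h - f (g h) + g (f h) = h) ↔
      (∀ h ∈ H, ((f - (LinearMap.id : L →ₗ[ℂ] L)).comp g - g.comp (f - (LinearMap.id : L →ₗ[ℂ] L))) h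
        = (f - (LinearMap.id : L →ₗ[ℂ] L)) h)) := by
  -- derived basic facts
  have hxx : br x x = 0 := by
    have h := hanti x x
    have h2 : (2:ℂ) • br x x = 0 := by
      rw [two_smul]; nth_rewrite 2 [h]; exact add_neg_cancel _
    rcases smul_eq_zero.mp h2 with h3 | h3
    · norm_num at h3
    · exact h3
  have hvv : br v v = 0 := by
    have h := hanti v v
    have h2 : (2:ℂ) • br v v = 0 := by
      rw [two_smul]; nth_rewrite 2 [h]; exact add_neg_cancel _
    rcases smul_eq_zero.mp h2 with h3 | h3
    · norm_num at h3
    · exact h3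
  have hbx' : ∀ h ∈ H, br h x = -f h := fun h hh => by rw [hanti, hbx h hh]
  have hbv' : ∀ h ∈ H, br h v = -g h := fun h hh => by rw [hanti, hbv h hh]
  have hbvx : br v x = -(h₁ + x) := by rw [hanti, hbxv]
  have hωH' : ∀ (w : L), ∀ h ∈ H, ω w h = 0 := fun w h hh => by
    rw [hskew, hωH h hh, neg_zero]
  have hωvx : ω v x = -1 := by rw [hskew, hωxv]
  have hωxx : ω x x = 0 := by have h := hskew x x; linear_combination h / 2
  have hωvv : ω v v = 0 := by have h := hskew v v; linear_combination h / 2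
  constructor
  · constructor
    · -- Jacobi → condition
      intro J h hh
      have e := J x v h
      have r1 : br (br x v) h = f h := by
        rw [hbxv, map_add, LinearMap.add_apply, habH h₁ hh₁ h hh, hbx h hh, zero_add]
      have r2 : br (br v h) x = -(f (g h)) := by
        rw [hbv h hh, hanti, hbx (g h) (hg h hh)]
      have r3 : br (br h x) v = g (f h) := by
        rw [hbx' h hh, map_neg, LinearMap.neg_apply, hanti, hbv (f h) (hf h hh), neg_neg]
      rw [r1, r2, r3, hωxv, hωH' v h hh, hωH h hh x, one_smul, zero_smul, zero_smul,
        add_zero, add_zero] at e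
      linear_combination (norm := module) e
    · -- condition → Jacobi
      intro cond
      have key0 : ∀ a b c : L, (a ∈ H ∨ a = x ∨ a = v) → (b ∈ H ∨ b = x ∨ b = v) →
          (c ∈ H ∨ c = x ∨ c = v) →
          br (br a b) c + br (br b c) a + br (br c a) b
            - (ω a b • c + ω b c • a + ω c a • b) = 0 := by
        rintro a b c (ha | rfl | rfl) (hb | rfl | rfl) (hc | rfl | rfl) <;>
          simp only [habH, hbx, hbv, hbx', hbv', hbxv, hbvx, hxx, hvv, hωH, hωH', hωxv,
            hωvx, hωxx, hωvv, hf, hg, hh₁, map_add, map_neg, map_zero, LinearMap.add_apply,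
            LinearMap.neg_apply, LinearMap.zero_apply, zero_smul, smul_zero, one_smul,
            neg_smul, neg_neg, neg_zero, add_zero, zero_add, sub_zero, zero_sub, sub_self, *] <;>
          first
            | module
            | linear_combination (norm := module) cond a ha
            | linear_combination (norm := module) (-1:ℂ) • cond a ha
            | linear_combination (norm := module) cond b hb
            | linear_combination (norm := module) (-1:ℂ) • cond b hb
            | linear_combination (norm := module) cond c hc
            | linear_combination (norm := module) (-1:ℂ) • cond c hc
      have key1 : ∀ a b : L, (a ∈ H ∨ a = x ∨ a = v) → (b ∈ H ∨ b = x ∨ b = v) → ∀ z : L,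
          br (br a b) z + br (br b z) a + br (br z a) b
            - (ω a b • z + ω b z • a + ω z a • b) = 0 := by
        intro a b ha hb z
        obtain ⟨hz, hhz, s, t, rfl⟩ := hspan z
        have e1 := key0 a b hz ha hb (Or.inl hhz)
        have e2 := key0 a b x ha hb (Or.inr (Or.inl rfl))
        have e3 := key0 a b v ha hb (Or.inr (Or.inr rfl))
        simp only [map_add, map_smul, LinearMap.add_apply, LinearMap.smul_apply, smul_eq_mul]
        linear_combination (norm := module) e1 + s • e2 + t • e3
      have key2 : ∀ a : L, (a ∈ H ∨ a = x ∨ a = v) → ∀ w z : L,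
          br (br a w) z + br (br w z) a + br (br z a) w
            - (ω a w • z + ω w z • a + ω z a • w) = 0 := by
        intro a ha w z
        obtain ⟨hw, hhw, s, t, rfl⟩ := hspan w
        have e1 := key1 a hw ha (Or.inl hhw) z
        have e2 := key1 a x ha (Or.inr (Or.inl rfl)) z
        have e3 := key1 a v ha (Or.inr (Or.inr rfl)) z
        simp only [map_add, map_smul, LinearMap.add_apply, LinearMap.smul_apply, smul_eq_mul]
        linear_combination (norm := module) e1 + s • e2 + t • e3
      have key3 : ∀ u w z : L,
          br (br u w) z + br (br w z) u + br (br z u) w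
            - (ω u w • z + ω w z • u + ω z u • w) = 0 := by
        intro u w z
        obtain ⟨hu, hhu, s, t, rfl⟩ := hspan u
        have e1 := key2 hu (Or.inl hhu) w z
        have e2 := key2 x (Or.inr (Or.inl rfl)) w z
        have e3 := key2 v (Or.inr (Or.inr rfl)) w z
        simp only [map_add, map_smul, LinearMap.add_apply, LinearMap.smul_apply, smul_eq_mul]
        linear_combination (norm := module) e1 + s • e2 + t • e3
      intro u w z
      rw [← sub_eq_zero]
      rw [show ∀ p q r : L, p + q + r - (ω u w • z + ω w z • u + ω z u • w) =
        p + q + r - (ω u w • z + ω w z • u + ω z u • w) from fun _ _ _ => rfl]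
      exact key3 u w z
  · constructor <;> intro c h hh <;> have e := c h hh <;>
      simp only [LinearMap.sub_apply, LinearMap.comp_apply, LinearMap.id_apply, map_sub]
        at e ⊢ <;>
      linear_combination (norm := module) (-1 : ℂ) • e
end

section
/- Let L be a nontrivial ω-Lie algebra over ℂ with dim L ≥ 5, of the form L = H ⊕ ℂx ⊕ ℂv where [h,h']=0 for all h,h'∈H, [x,h]∈H for all h∈H, [v,h]∈H⊕ℂx for all h∈H, ω(h,w)=0 for all h∈H and w∈L, and ω(x,v)=1. Suppose there exists h₀∈H such that the ℂx-component of [v,h₀] is nonzero. Then L is perfect ([L,L]=L), and there exist a nonzero scalar b ∈ ℂ, a decomposition H = H₁ ⊕ ℂh₀', an element x' ∈ x + H with ω(x',v)=1, and elements h₂ ∈ H, h₃ ∈ H₁ such that: [x',h]=0 for all h∈H₁, [x',h₀']=−b h₀', [v,h]=b⁻¹h for all h∈H₁, [v,h₀']=h₃ + b⁻¹h₀' + x', and [x',v]=h₂ + b v. -/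
/-- Derivation of the P₁-type algebras. Let `L = H ⊕ ℂx ⊕ ℂv` be a
nontrivial ω-Lie algebra over ℂ of dimension ≥ 5 with `H` abelian, `[x,H] ⊆ H`,
`[v,H] ⊆ H ⊕ ℂx`, `ω(H,·) = 0` and `ω(x,v) = 1`. If the `ℂx`-component of `[v,h₀]`
is nonzero for some `h₀ ∈ H`, then `L` is perfect and there are `b ≠ 0`,
a decomposition `H = H₁ ⊕ ℂh₀'`, an element `x' ∈ x + H` with `ω(x',v) = 1`,
and `h₂ ∈ H`, `h₃ ∈ H₁` such that `[x',H₁] = 0`, `[x',h₀'] = −b h₀'`,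
`[v,h] = b⁻¹ h` on `H₁`, `[v,h₀'] = h₃ + b⁻¹ h₀' + x'` and `[x',v] = h₂ + b v`. -/
theorem stmt_5
    (L : Type*) [AddCommGroup L] [Module ℂ L] [FiniteDimensional ℂ L]
    (br : L →ₗ[ℂ] L →ₗ[ℂ] L) (ω : L →ₗ[ℂ] L →ₗ[ℂ] ℂ)
    (hskew : ∀ u v : L, ω u v = -ω v u)
    (hanti : ∀ u v : L, br u v = -br v u)
    (hjac : ∀ u v w : L, br (br u v) w + br (br v w) u + br (br w u) v
      = ω u v • w + ω v w • u + ω w u • v)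
    (hnt : ∃ u w : L, ω u w ≠ 0)
    (hdim : 5 ≤ Module.finrank ℂ L)
    (H : Submodule ℂ L) (x v : L)
    (hspan : ∀ z : L, ∃ h ∈ H, ∃ s t : ℂ, z = h + s • x + t • v)
    (hxH : x ∉ H)
    (hvH : v ∉ H ⊔ Submodule.span ℂ {x})
    (habH : ∀ h ∈ H, ∀ h' ∈ H, br h h' = 0)
    (hxh : ∀ h ∈ H, br x h ∈ H)
    (hvh : ∀ h ∈ H, br v h ∈ H ⊔ Submodule.span ℂ {x})
    (hωH : ∀ h ∈ H, ∀ w : L, ω h w = 0)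
    (hωxv : ω x v = 1)
    (h₀ : L) (hh₀ : h₀ ∈ H) (hnzx : br v h₀ ∉ H) :
    Submodule.span ℂ {z : L | ∃ u w : L, z = br u w} = ⊤ ∧
    ∃ b : ℂ, b ≠ 0 ∧
      ∃ (H₁ : Submodule ℂ L) (h₀' x' h₂ h₃ : L),
        H₁ ≤ H ∧ h₀' ∈ H ∧ h₀' ∉ H₁ ∧ H₁ ⊔ Submodule.span ℂ {h₀'} = H ∧
        (∃ δ ∈ H, x' = x + δ) ∧ ω x' v = 1 ∧ h₂ ∈ H ∧ h₃ ∈ H₁ ∧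
        (∀ h ∈ H₁, br x' h = 0) ∧
        br x' h₀' = -(b • h₀') ∧
        (∀ h ∈ H₁, br v h = b⁻¹ • h) ∧
        br v h₀' = h₃ + b⁻¹ • h₀' + x' ∧
        br x' v = h₂ + b • v := by
  classical
  have hdec : ∀ h : L, ∃ p : L, ∃ μ : ℂ, h ∈ H → p ∈ H ∧ br v h = p + μ • x := by
    intro h
    by_cases hh : h ∈ H
    · obtain ⟨p, hp, q, hq, hpq⟩ := Submodule.mem_sup.mp (hvh h hh)
      obtain ⟨μ, rfl⟩ := Submodule.mem_span_singleton.mp hq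
      exact ⟨p, μ, fun _ => ⟨hp, hpq.symm⟩⟩
    · exact ⟨0, 0, fun h' => absurd h' hh⟩
  choose a l spec using hdec
  have aH : ∀ h ∈ H, a h ∈ H := fun h hh => (spec h hh).1
  have brv : ∀ h ∈ H, br v h = a h + l h • x := fun h hh => (spec h hh).2
  have uniq : ∀ p ∈ H, ∀ q ∈ H, ∀ μ ν : ℂ, p + μ • x = q + ν • x → p = q ∧ μ = ν := by
    intro p hp q hq μ ν heq
    by_cases hμν : μ = ν
    · subst hμν
      exact ⟨add_right_cancel heq, rfl⟩
    · exfalso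
      apply hxH
      have h1 : (μ - ν) • x = q - p := by linear_combination (norm := module) heq
      have h2 : x = (μ - ν)⁻¹ • (q - p) := by
        rw [← h1, smul_smul, inv_mul_cancel₀ (sub_ne_zero.mpr hμν), one_smul]
      rw [h2]
      exact Submodule.smul_mem _ _ (Submodule.sub_mem _ hq hp)
  have l_add : ∀ p ∈ H, ∀ q ∈ H, a (p + q) = a p + a q ∧ l (p + q) = l p + l q := by
    intro p hp q hq
    have hm := H.add_mem hp hq
    apply uniq _ (aH _ hm) _ (H.add_mem (aH p hp) (aH q hq))
    rw [← brv _ hm, map_add, brv p hp, brv q hq]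
    module
  have l_smul : ∀ (μ : ℂ), ∀ p ∈ H, a (μ • p) = μ • a p ∧ l (μ • p) = μ * l p := by
    intro μ p hp
    have hm := H.smul_mem μ hp
    apply uniq _ (aH _ hm) _ (H.smul_mem μ (aH p hp))
    rw [← brv _ hm, map_smul, brv p hp]
    module
  have l_zero : a 0 = 0 ∧ l 0 = 0 := by
    apply uniq _ (aH 0 H.zero_mem) _ H.zero_mem
    rw [← brv 0 H.zero_mem, map_zero]
    module
  have hlh₀ : l h₀ ≠ 0 := by
    intro h0
    apply hnzx
    rw [brv h₀ hh₀, h0, zero_smul, add_zero]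
    exact aH h₀ hh₀
  have hxx : br x x = 0 := by
    have h := hanti x x
    have h2 : (2 : ℂ) • br x x = 0 := by
      rw [two_smul]; nth_rewrite 1 [h]; exact neg_add_cancel _
    simpa using (smul_eq_zero.mp h2).resolve_left two_ne_zero
  have J1 : ∀ p ∈ H, ∀ q ∈ H, l p • br x q = l q • br x p := by
    intro p hp q hq
    have hj := hjac v p q
    rw [brv p hp, hanti q v, brv q hq, habH p hp q hq] at hj
    simp only [map_add, map_smul, map_neg, map_zero, LinearMap.add_apply, LinearMap.smul_apply,
      LinearMap.neg_apply, LinearMap.zero_apply] at hj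
    rw [habH _ (aH p hp) q hq, habH _ (aH q hq) p hp, hωH p hp q, hωH q hq v, hskew v p,
      hωH p hp v] at hj
    linear_combination (norm := module) hj
  set c : L := (l h₀)⁻¹ • br x h₀ with hc
  have cH : c ∈ H := H.smul_mem _ (hxh h₀ hh₀)
  have brx : ∀ h ∈ H, br x h = l h • c := by
    intro h hh
    have h1 := J1 h hh h₀ hh₀
    calc br x h = (l h₀)⁻¹ • (l h₀ • br x h) := by
          rw [smul_smul, inv_mul_cancel₀ hlh₀, one_smul]
      _ = (l h₀)⁻¹ • (l h • br x h₀) := by rw [← h1]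
      _ = l h • c := by rw [hc, smul_smul, smul_smul, mul_comm]
  obtain ⟨h₁, hh₁, s, t, hxv⟩ := hspan (br x v)
  have Ekey : ∀ h ∈ H, ((s * l h) • c + t • a h - l (a h) • c + l h • a c = h) ∧
      (t * l h + l h * l c = 0) := by
    intro h hh
    have hj := hjac x v h
    rw [hxv, hanti h x, brx h hh, brv h hh] at hj
    simp only [map_add, map_smul, map_neg, map_zero, LinearMap.add_apply, LinearMap.smul_apply,
      LinearMap.neg_apply, LinearMap.zero_apply] at hj
    rw [brx h hh, brv h hh, habH h₁ hh₁ h hh, hanti (a h) x, brx _ (aH h hh), hxx,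
      hanti c v, brv c cH, hωxv, hskew v h, hωH h hh v, hωH h hh x] at hj
    have hj2 : (s * l h) • c + t • a h - l (a h) • c + l h • a c +
        (t * l h + l h * l c) • x = h + (0 : ℂ) • x := by
      linear_combination (norm := module) hj
    exact uniq _ (by
      refine Submodule.add_mem _ (Submodule.sub_mem _ (Submodule.add_mem _ ?_ ?_) ?_) ?_ <;>
        exact H.smul_mem _ (by first | exact cH | exact aH h hh | exact aH c cH))
      _ hh _ _ hj2
  have hlc : l c = -t := by
    have h2 := (Ekey h₀ hh₀).2
    have h3 : l h₀ * (t + l c) = 0 := by ring_nf; ring_nf at h2; linear_combination h2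
    have := (mul_eq_zero.mp h3).resolve_left hlh₀
    linear_combination this
  have ht : t ≠ 0 := by
    intro ht0
    have hHsp : ∀ h ∈ H, h = (s * l h - l (a h)) • c + l h • a c := by
      intro h hh
      have := (Ekey h hh).1
      rw [ht0] at this
      linear_combination (norm := module) -this
    have htop : Submodule.span ℂ (Set.range ![c, a c, x, v]) = ⊤ := by
      rw [eq_top_iff]
      intro z _
      obtain ⟨h, hh, s', t', rfl⟩ := hspan z
      have hin : ∀ i : Fin 4, ![c, a c, x, v] i ∈ Submodule.span ℂ (Set.range ![c, a c, x, v]) :=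
        fun i => Submodule.subset_span ⟨i, rfl⟩
      have h0 := hin 0; have h1' := hin 1; have h2' := hin 2; have h3' := hin 3
      simp only [Matrix.cons_val_zero, Matrix.cons_val_one, Matrix.head_cons,
        Matrix.cons_val_two, Matrix.tail_cons, Matrix.cons_val_three] at h0 h1' h2' h3'
      rw [hHsp h hh]
      exact Submodule.add_mem _ (Submodule.add_mem _
        (Submodule.add_mem _ (Submodule.smul_mem _ _ h0) (Submodule.smul_mem _ _ h1'))
        (Submodule.smul_mem _ _ h2')) (Submodule.smul_mem _ _ h3')
    have hle : Module.finrank ℂ L ≤ 4 := by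
      have := finrank_le_of_span_eq_top htop
      simpa using this
    omega
  have kerE : ∀ h ∈ H, l h = 0 → a h = t⁻¹ • h := by
    intro h hh hl0
    have e1 := (Ekey h hh).1
    rw [hl0] at e1
    have e : t • a h + (-(l (a h))) • c = h := by linear_combination (norm := module) e1
    have e2 : l (t • a h + (-(l (a h))) • c) = l h := by rw [e]
    rw [(l_add _ (H.smul_mem _ (aH h hh)) _ (H.smul_mem _ cH)).2,
      (l_smul t _ (aH h hh)).2, (l_smul _ c cH).2, hlc, hl0] at e2
    have hla : l (a h) = 0 := by
      have h3 : (2 * t) * l (a h) = 0 := by linear_combination e2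
      exact (mul_eq_zero.mp h3).resolve_left (by simpa using ht)
    rw [hla] at e
    calc a h = t⁻¹ • (t • a h + (-(0:ℂ)) • c) := by
          rw [neg_zero, zero_smul, add_zero, smul_smul, inv_mul_cancel₀ ht, one_smul]
      _ = t⁻¹ • h := by rw [e]
  have lac : l (a c) = -1 - s * t := by
    have e1 := (Ekey c cH).1
    rw [hlc] at e1
    have ec : (s * -t - l (a c)) • c = c := by linear_combination (norm := module) e1
    have e2 : l ((s * -t - l (a c)) • c) = l c := by rw [ec]
    rw [(l_smul _ c cH).2, hlc] at e2
    have h3 : (-t) * (s * -t - l (a c) - 1) = 0 := by linear_combination e2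
    have := (mul_eq_zero.mp h3).resolve_left (neg_ne_zero.mpr ht)
    linear_combination -this
  constructor
  · -- perfectness
    rw [eq_top_iff]
    intro z _
    set S := Submodule.span ℂ {z : L | ∃ u w : L, z = br u w} with hS
    have memS : ∀ u w : L, br u w ∈ S := fun u w => Submodule.subset_span ⟨u, w, rfl⟩
    have cS : c ∈ S := by rw [hc]; exact S.smul_mem _ (memS x h₀)
    have HS : ∀ h ∈ H, h ∈ S := by
      intro h hh
      have hm' : h + (-(l h * (l c)⁻¹)) • c ∈ H := H.add_mem hh (H.smul_mem _ cH)
      have hl' : l (h + (-(l h * (l c)⁻¹)) • c) = 0 := by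
        rw [(l_add h hh _ (H.smul_mem _ cH)).2, (l_smul _ c cH).2, hlc]
        field_simp
        ring
      have ha' := kerE _ hm' hl'
      have h1 : h + (-(l h * (l c)⁻¹)) • c ∈ S := by
        have hbr : h + (-(l h * (l c)⁻¹)) • c
            = t • br v (h + (-(l h * (l c)⁻¹)) • c) := by
          rw [brv _ hm', hl', zero_smul, add_zero, ha', smul_smul t t⁻¹,
            mul_inv_cancel₀ ht, one_smul]
        rw [hbr]; exact S.smul_mem _ (memS _ _)
      have hm2 : h = (h + (-(l h * (l c)⁻¹)) • c) + (l h * (l c)⁻¹) • c := by module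
      rw [hm2]; exact S.add_mem h1 (S.smul_mem _ cS)
    have xS : x ∈ S := by
      have hx2 : x = (l h₀)⁻¹ • (br v h₀ - a h₀) := by
        rw [brv h₀ hh₀]
        have : a h₀ + l h₀ • x - a h₀ = l h₀ • x := by module
        rw [this, smul_smul, inv_mul_cancel₀ hlh₀, one_smul]
      rw [hx2]; exact S.smul_mem _ (S.sub_mem (memS v h₀) (HS _ (aH h₀ hh₀)))
    have vS : v ∈ S := by
      have hv2 : v = t⁻¹ • (br x v - h₁ - s • x) := by
        rw [hxv]
        have : h₁ + s • x + t • v - h₁ - s • x = t • v := by module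
        rw [this, smul_smul, inv_mul_cancel₀ ht, one_smul]
      rw [hv2]
      exact S.smul_mem _ (S.sub_mem (S.sub_mem (memS x v) (HS h₁ hh₁)) (S.smul_mem _ xS))
    obtain ⟨h, hh, s', t', rfl⟩ := hspan z
    exact S.add_mem (S.add_mem (HS h hh) (S.smul_mem _ xS)) (S.smul_mem _ vS)
  · -- the structure constants
    set d : L := (-t⁻¹) • a c + (t⁻¹ * t⁻¹) • c with hd
    have dH : d ∈ H := H.add_mem (H.smul_mem _ (aH c cH)) (H.smul_mem _ cH)
    have hld : l d = s := by
      rw [hd, (l_add _ (H.smul_mem _ (aH c cH)) _ (H.smul_mem _ cH)).2,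
        (l_smul _ _ (aH c cH)).2, (l_smul _ _ cH).2, lac, hlc]
      field_simp
      ring
    set Λ : H →ₗ[ℂ] ℂ :=
      { toFun := fun p => l p
        map_add' := fun p q => (l_add p p.2 q q.2).2
        map_smul' := fun μ p => (l_smul μ p p.2).2 } with hΛ
    set H₁ : Submodule ℂ L := (LinearMap.ker Λ).map H.subtype with hH₁
    have hH₁mem : ∀ z : L, z ∈ H₁ ↔ z ∈ H ∧ l z = 0 := by
      intro z
      constructor
      · rintro ⟨p, hp, rfl⟩
        exact ⟨p.2, hp⟩
      · rintro ⟨hz, hl0⟩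
        exact ⟨⟨z, hz⟩, hl0, rfl⟩
    have h₀'H : (-t⁻¹) • c ∈ H := H.smul_mem _ cH
    have hl1 : l ((-t⁻¹) • c) = 1 := by
      rw [(l_smul _ c cH).2, hlc]; field_simp
    refine ⟨t, ht, H₁, (-t⁻¹) • c, x + d, h₁ - a d, 0, ?_, h₀'H, ?_, ?_, ⟨d, dH, rfl⟩,
      ?_, H.sub_mem hh₁ (aH d dH), H₁.zero_mem, ?_, ?_, ?_, ?_, ?_⟩
    · exact fun z hz => ((hH₁mem z).1 hz).1
    · intro hmem
      have := ((hH₁mem _).1 hmem).2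
      rw [hl1] at this
      exact one_ne_zero this
    · apply le_antisymm
      · exact sup_le (fun z hz => ((hH₁mem z).1 hz).1)
          ((Submodule.span_singleton_le_iff_mem _ _).mpr h₀'H)
      · intro h hh
        refine Submodule.mem_sup.mpr ⟨h - l h • ((-t⁻¹) • c), ?_, l h • ((-t⁻¹) • c),
          Submodule.smul_mem _ _ (Submodule.mem_span_singleton_self _), by abel⟩
        refine (hH₁mem _).2 ⟨H.sub_mem hh (H.smul_mem _ h₀'H), ?_⟩
        have hsub : h - l h • ((-t⁻¹) • c) = h + (-(l h)) • ((-t⁻¹) • c) := by module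
        rw [hsub, (l_add h hh _ (H.smul_mem _ h₀'H)).2, (l_smul _ _ h₀'H).2, hl1]
        ring
    · rw [map_add, LinearMap.add_apply, hωxv, hωH d dH v, add_zero]
    · intro h hh
      obtain ⟨hhH, hl0⟩ := (hH₁mem h).1 hh
      rw [map_add, LinearMap.add_apply, brx h hhH, hl0, zero_smul,
        habH d dH h hhH, add_zero]
    · rw [map_add, LinearMap.add_apply, brx _ h₀'H, hl1, one_smul,
        habH d dH _ h₀'H, add_zero, smul_smul]
      have e2 : t * -t⁻¹ = -1 := by field_simp
      rw [e2, neg_one_smul, neg_neg]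
    · intro h hh
      obtain ⟨hhH, hl0⟩ := (hH₁mem h).1 hh
      rw [brv h hhH, hl0, zero_smul, add_zero, kerE h hhH hl0]
    · rw [map_smul, brv c cH, hlc, hd]
      have lhs : (-t⁻¹) • (a c + (-t) • x) = (-t⁻¹) • a c + x := by
        rw [smul_add, smul_smul]
        have e1 : -t⁻¹ * -t = (1 : ℂ) := by field_simp
        rw [e1, one_smul]
      rw [lhs]
      module
    · rw [map_add, LinearMap.add_apply, hxv, hanti d v, brv d dH, hld]
      module
end

section
/- Let H₁ be a finite-dimensional complex vector space, let H = ℂh₀ ⊕ H₁, let a ∈ ℂ be nonzero, and let h₁ ∈ H, h₂ ∈ H₁. Define L = H ⊕ ℂx ⊕ ℂv with the antisymmetric bilinear bracket determined by [h,h']=0 for h,h'∈H, [x,h]=0 for h∈H₁, [x,h₀]=−a h₀, [v,h]=a⁻¹h for h∈H₁, [v,h₀]=h₂ + a⁻¹h₀ + x, [x,v]=h₁ + a v, and the skew-symmetric bilinear form ω determined by ω(x,v)=1 and all other values among basis elements of H, x, v equal to zero. Then L is a nontrivial ω-Lie algebra and L is perfect, i.e. [L,L]=L. -/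
set_option maxHeartbeats 16000000

/-- The P₁-type algebra. With `H = ℂh₀ ⊕ H₁`, `L = H ⊕ ℂx ⊕ ℂv`,
`a ≠ 0`, `h₁ ∈ H`, `h₂ ∈ H₁`, and the antisymmetric bilinear bracket determined by
`[H,H] = 0`, `[x,h] = 0` for `h ∈ H₁`, `[x,h₀] = −a h₀`, `[v,h] = a⁻¹ h` for
`h ∈ H₁`, `[v,h₀] = h₂ + a⁻¹ h₀ + x`, `[x,v] = h₁ + a v`, and ω determined by
`ω(x,v) = 1` and all other values zero, `L` is a nontrivial ω-Lie algebra and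
`L` is perfect. -/
theorem stmt_6
    (L : Type*) [AddCommGroup L] [Module ℂ L] [FiniteDimensional ℂ L]
    (br : L →ₗ[ℂ] L →ₗ[ℂ] L) (ω : L →ₗ[ℂ] L →ₗ[ℂ] ℂ)
    (hskew : ∀ u v : L, ω u v = -ω v u)
    (hanti : ∀ u v : L, br u v = -br v u)
    (H₁ : Submodule ℂ L) (h₀ x v : L) (a : ℂ) (ha : a ≠ 0) (h₁ h₂ : L)
    (hh₁ : h₁ ∈ Submodule.span ℂ {h₀} ⊔ H₁) (hh₂ : h₂ ∈ H₁)
    (hspan : ∀ z : L, ∃ c s t : ℂ, ∃ h ∈ H₁, z = c • h₀ + h + s • x + t • v)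
    (hh₀ : h₀ ∉ H₁)
    (hxind : x ∉ Submodule.span ℂ {h₀} ⊔ H₁)
    (hvind : v ∉ Submodule.span ℂ {h₀} ⊔ H₁ ⊔ Submodule.span ℂ {x})
    (habH : ∀ h ∈ Submodule.span ℂ {h₀} ⊔ H₁, ∀ h' ∈ Submodule.span ℂ {h₀} ⊔ H₁,
      br h h' = 0)
    (hbxh : ∀ h ∈ H₁, br x h = 0)
    (hbxh₀ : br x h₀ = -(a • h₀))
    (hbvh : ∀ h ∈ H₁, br v h = a⁻¹ • h)
    (hbvh₀ : br v h₀ = h₂ + a⁻¹ • h₀ + x)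
    (hbxv : br x v = h₁ + a • v)
    (hωH : ∀ h ∈ Submodule.span ℂ {h₀} ⊔ H₁, ∀ w : L, ω h w = 0)
    (hωxv : ω x v = 1) :
    (∀ u w z : L, br (br u w) z + br (br w z) u + br (br z u) w
      = ω u w • z + ω w z • u + ω z u • w) ∧
    (∃ u w : L, ω u w ≠ 0) ∧
    Submodule.span ℂ {z : L | ∃ u w : L, z = br u w} = ⊤ := by
  classical
  obtain ⟨y, hy, k₀, hk₀, hyk⟩ := Submodule.mem_sup.mp hh₁
  obtain ⟨c₀, rfl⟩ := Submodule.mem_span_singleton.mp hy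
  have m0 : h₀ ∈ Submodule.span ℂ {h₀} ⊔ H₁ :=
    Submodule.mem_sup_left (Submodule.mem_span_singleton_self h₀)
  have mK : ∀ k ∈ H₁, k ∈ Submodule.span ℂ {h₀} ⊔ H₁ := fun k hk =>
    Submodule.mem_sup_right hk
  -- derived bracket values
  have b0x : br h₀ x = a • h₀ := by rw [hanti, hbxh₀, neg_neg]
  have bKx : ∀ k ∈ H₁, br k x = 0 := fun k hk => by rw [hanti, hbxh k hk, neg_zero]
  have bKv : ∀ k ∈ H₁, br k v = -(a⁻¹ • k) := fun k hk => by rw [hanti, hbvh k hk]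
  have b0v : br h₀ v = -(h₂ + a⁻¹ • h₀ + x) := by rw [hanti, hbvh₀]
  have hxv' : br x v = c₀ • h₀ + k₀ + a • v := by rw [hbxv, ← hyk]
  have bvx : br v x = -(c₀ • h₀ + k₀ + a • v) := by rw [hanti, hxv']
  have b00 : br h₀ h₀ = 0 := habH h₀ m0 h₀ m0
  have bxx : br x x = 0 := by
    have h2 : (2 : ℂ) • br x x = 0 := by
      rw [two_smul]; nth_rewrite 1 [hanti]; exact neg_add_cancel _
    simpa using h2
  have bvv : br v v = 0 := by
    have h2 : (2 : ℂ) • br v v = 0 := by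
      rw [two_smul]; nth_rewrite 1 [hanti]; exact neg_add_cancel _
    simpa using h2
  -- derived ω values
  have ω0 : ∀ w : L, ω h₀ w = 0 := hωH h₀ m0
  have ωx0 : ω x h₀ = 0 := by rw [hskew, ω0, neg_zero]
  have ωxK : ∀ k ∈ H₁, ω x k = 0 := fun k hk => by
    rw [hskew, hωH k (mK k hk), neg_zero]
  have ωv0 : ω v h₀ = 0 := by rw [hskew, ω0, neg_zero]
  have ωvK : ∀ k ∈ H₁, ω v k = 0 := fun k hk => by
    rw [hskew, hωH k (mK k hk), neg_zero]
  have ωvx : ω v x = -1 := by rw [hskew, hωxv]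
  have ωxx : ω x x = 0 := by linear_combination (hskew x x) / 2
  have ωvv : ω v v = 0 := by linear_combination (hskew v v) / 2
  refine ⟨?_, ⟨x, v, by rw [hωxv]; exact one_ne_zero⟩, ?_⟩
  · intro u w z
    obtain ⟨c₁, s₁, t₁, k₁, hk₁, rfl⟩ := hspan u
    obtain ⟨c₂, s₂, t₂, k₂, hk₂, rfl⟩ := hspan w
    obtain ⟨c₃, s₃, t₃, k₃, hk₃, rfl⟩ := hspan z
    have bKK_k₁_k₁ : br k₁ k₁ = 0 := habH k₁ (mK k₁ hk₁) k₁ (mK k₁ hk₁)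
    have bKK_k₁_k₂ : br k₁ k₂ = 0 := habH k₁ (mK k₁ hk₁) k₂ (mK k₂ hk₂)
    have bKK_k₁_k₃ : br k₁ k₃ = 0 := habH k₁ (mK k₁ hk₁) k₃ (mK k₃ hk₃)
    have bKK_k₁_k₀ : br k₁ k₀ = 0 := habH k₁ (mK k₁ hk₁) k₀ (mK k₀ hk₀)
    have bKK_k₁_h₂ : br k₁ h₂ = 0 := habH k₁ (mK k₁ hk₁) h₂ (mK h₂ hh₂)
    have b0K_k₁ : br h₀ k₁ = 0 := habH h₀ m0 k₁ (mK k₁ hk₁)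
    have bK0_k₁ : br k₁ h₀ = 0 := habH k₁ (mK k₁ hk₁) h₀ m0
    have bxK_k₁ : br x k₁ = 0 := hbxh k₁ hk₁
    have bKx_k₁ : br k₁ x = 0 := bKx k₁ hk₁
    have bvK_k₁ : br v k₁ = a⁻¹ • k₁ := hbvh k₁ hk₁
    have bKv_k₁ : br k₁ v = -(a⁻¹ • k₁) := bKv k₁ hk₁
    have ωK_k₁ : ∀ w : L, ω k₁ w = 0 := hωH k₁ (mK k₁ hk₁)
    have ωxK_k₁ : ω x k₁ = 0 := ωxK k₁ hk₁
    have ωvK_k₁ : ω v k₁ = 0 := ωvK k₁ hk₁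
    have bKK_k₂_k₁ : br k₂ k₁ = 0 := habH k₂ (mK k₂ hk₂) k₁ (mK k₁ hk₁)
    have bKK_k₂_k₂ : br k₂ k₂ = 0 := habH k₂ (mK k₂ hk₂) k₂ (mK k₂ hk₂)
    have bKK_k₂_k₃ : br k₂ k₃ = 0 := habH k₂ (mK k₂ hk₂) k₃ (mK k₃ hk₃)
    have bKK_k₂_k₀ : br k₂ k₀ = 0 := habH k₂ (mK k₂ hk₂) k₀ (mK k₀ hk₀)
    have bKK_k₂_h₂ : br k₂ h₂ = 0 := habH k₂ (mK k₂ hk₂) h₂ (mK h₂ hh₂)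
    have b0K_k₂ : br h₀ k₂ = 0 := habH h₀ m0 k₂ (mK k₂ hk₂)
    have bK0_k₂ : br k₂ h₀ = 0 := habH k₂ (mK k₂ hk₂) h₀ m0
    have bxK_k₂ : br x k₂ = 0 := hbxh k₂ hk₂
    have bKx_k₂ : br k₂ x = 0 := bKx k₂ hk₂
    have bvK_k₂ : br v k₂ = a⁻¹ • k₂ := hbvh k₂ hk₂
    have bKv_k₂ : br k₂ v = -(a⁻¹ • k₂) := bKv k₂ hk₂
    have ωK_k₂ : ∀ w : L, ω k₂ w = 0 := hωH k₂ (mK k₂ hk₂)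
    have ωxK_k₂ : ω x k₂ = 0 := ωxK k₂ hk₂
    have ωvK_k₂ : ω v k₂ = 0 := ωvK k₂ hk₂
    have bKK_k₃_k₁ : br k₃ k₁ = 0 := habH k₃ (mK k₃ hk₃) k₁ (mK k₁ hk₁)
    have bKK_k₃_k₂ : br k₃ k₂ = 0 := habH k₃ (mK k₃ hk₃) k₂ (mK k₂ hk₂)
    have bKK_k₃_k₃ : br k₃ k₃ = 0 := habH k₃ (mK k₃ hk₃) k₃ (mK k₃ hk₃)
    have bKK_k₃_k₀ : br k₃ k₀ = 0 := habH k₃ (mK k₃ hk₃) k₀ (mK k₀ hk₀)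
    have bKK_k₃_h₂ : br k₃ h₂ = 0 := habH k₃ (mK k₃ hk₃) h₂ (mK h₂ hh₂)
    have b0K_k₃ : br h₀ k₃ = 0 := habH h₀ m0 k₃ (mK k₃ hk₃)
    have bK0_k₃ : br k₃ h₀ = 0 := habH k₃ (mK k₃ hk₃) h₀ m0
    have bxK_k₃ : br x k₃ = 0 := hbxh k₃ hk₃
    have bKx_k₃ : br k₃ x = 0 := bKx k₃ hk₃
    have bvK_k₃ : br v k₃ = a⁻¹ • k₃ := hbvh k₃ hk₃
    have bKv_k₃ : br k₃ v = -(a⁻¹ • k₃) := bKv k₃ hk₃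
    have ωK_k₃ : ∀ w : L, ω k₃ w = 0 := hωH k₃ (mK k₃ hk₃)
    have ωxK_k₃ : ω x k₃ = 0 := ωxK k₃ hk₃
    have ωvK_k₃ : ω v k₃ = 0 := ωvK k₃ hk₃
    have bKK_k₀_k₁ : br k₀ k₁ = 0 := habH k₀ (mK k₀ hk₀) k₁ (mK k₁ hk₁)
    have bKK_k₀_k₂ : br k₀ k₂ = 0 := habH k₀ (mK k₀ hk₀) k₂ (mK k₂ hk₂)
    have bKK_k₀_k₃ : br k₀ k₃ = 0 := habH k₀ (mK k₀ hk₀) k₃ (mK k₃ hk₃)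
    have bKK_k₀_k₀ : br k₀ k₀ = 0 := habH k₀ (mK k₀ hk₀) k₀ (mK k₀ hk₀)
    have bKK_k₀_h₂ : br k₀ h₂ = 0 := habH k₀ (mK k₀ hk₀) h₂ (mK h₂ hh₂)
    have b0K_k₀ : br h₀ k₀ = 0 := habH h₀ m0 k₀ (mK k₀ hk₀)
    have bK0_k₀ : br k₀ h₀ = 0 := habH k₀ (mK k₀ hk₀) h₀ m0
    have bxK_k₀ : br x k₀ = 0 := hbxh k₀ hk₀
    have bKx_k₀ : br k₀ x = 0 := bKx k₀ hk₀
    have bvK_k₀ : br v k₀ = a⁻¹ • k₀ := hbvh k₀ hk₀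
    have bKv_k₀ : br k₀ v = -(a⁻¹ • k₀) := bKv k₀ hk₀
    have ωK_k₀ : ∀ w : L, ω k₀ w = 0 := hωH k₀ (mK k₀ hk₀)
    have ωxK_k₀ : ω x k₀ = 0 := ωxK k₀ hk₀
    have ωvK_k₀ : ω v k₀ = 0 := ωvK k₀ hk₀
    have bKK_h₂_k₁ : br h₂ k₁ = 0 := habH h₂ (mK h₂ hh₂) k₁ (mK k₁ hk₁)
    have bKK_h₂_k₂ : br h₂ k₂ = 0 := habH h₂ (mK h₂ hh₂) k₂ (mK k₂ hk₂)
    have bKK_h₂_k₃ : br h₂ k₃ = 0 := habH h₂ (mK h₂ hh₂) k₃ (mK k₃ hk₃)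
    have bKK_h₂_k₀ : br h₂ k₀ = 0 := habH h₂ (mK h₂ hh₂) k₀ (mK k₀ hk₀)
    have bKK_h₂_h₂ : br h₂ h₂ = 0 := habH h₂ (mK h₂ hh₂) h₂ (mK h₂ hh₂)
    have b0K_h₂ : br h₀ h₂ = 0 := habH h₀ m0 h₂ (mK h₂ hh₂)
    have bK0_h₂ : br h₂ h₀ = 0 := habH h₂ (mK h₂ hh₂) h₀ m0
    have bxK_h₂ : br x h₂ = 0 := hbxh h₂ hh₂
    have bKx_h₂ : br h₂ x = 0 := bKx h₂ hh₂
    have bvK_h₂ : br v h₂ = a⁻¹ • h₂ := hbvh h₂ hh₂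
    have bKv_h₂ : br h₂ v = -(a⁻¹ • h₂) := bKv h₂ hh₂
    have ωK_h₂ : ∀ w : L, ω h₂ w = 0 := hωH h₂ (mK h₂ hh₂)
    have ωxK_h₂ : ω x h₂ = 0 := ωxK h₂ hh₂
    have ωvK_h₂ : ω v h₂ = 0 := ωvK h₂ hh₂
    simp only [map_add, map_smul, LinearMap.add_apply, LinearMap.smul_apply,
      hbxh₀, hbvh₀, hxv', b0x, b0v, bvx, b00, bxx, bvv,
      bKK_k₁_k₁, bKK_k₁_k₂, bKK_k₁_k₃, bKK_k₁_k₀, bKK_k₁_h₂, b0K_k₁, bK0_k₁, bxK_k₁, bKx_k₁, bvK_k₁, bKv_k₁, ωK_k₁, ωxK_k₁, ωvK_k₁, bKK_k₂_k₁, bKK_k₂_k₂, bKK_k₂_k₃, bKK_k₂_k₀, bKK_k₂_h₂, b0K_k₂, bK0_k₂, bxK_k₂, bKx_k₂, bvK_k₂, bKv_k₂, ωK_k₂, ωxK_k₂, ωvK_k₂, bKK_k₃_k₁, bKK_k₃_k₂, bKK_k₃_k₃, bKK_k₃_k₀, bKK_k₃_h₂, b0K_k₃, bK0_k₃, bxK_k₃,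 bKx_k₃, bvK_k₃, bKv_k₃, ωK_k₃, ωxK_k₃, ωvK_k₃, bKK_k₀_k₁, bKK_k₀_k₂, bKK_k₀_k₃, bKK_k₀_k₀, bKK_k₀_h₂, b0K_k₀, bK0_k₀, bxK_k₀, bKx_k₀, bvK_k₀, bKv_k₀, ωK_k₀, ωxK_k₀, ωvK_k₀, bKK_h₂_k₁, bKK_h₂_k₂, bKK_h₂_k₃, bKK_h₂_k₀, bKK_h₂_h₂, b0K_h₂, bK0_h₂, bxK_h₂, bKx_h₂, bvK_h₂, bKv_h₂, ωK_h₂, ωxK_h₂, ωvK_h₂,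
      ω0, hωxv, ωx0, ωv0, ωvx, ωxx, ωvv,
      smul_add, smul_neg, smul_zero, zero_add, add_zero, neg_zero, smul_smul,
      zero_smul, neg_smul, map_neg, map_zero, LinearMap.neg_apply, LinearMap.zero_apply]
    match_scalars
    all_goals try (field_simp; ring)
    all_goals {
      have hp : a ^ 9 * a⁻¹ ^ 8 = a := by field_simp; ring
      linear_combination (c₃ * t₁ * s₂ - c₃ * t₂ * s₁ - c₂ * t₁ * s₃ + c₂ * s₁ * t₃
        - s₂ * c₁ * t₃ + t₂ * c₁ * s₃) * hp }
  · have hself : ∀ u w : L,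
        br u w ∈ Submodule.span ℂ {z : L | ∃ u w : L, z = br u w} := fun u w =>
      Submodule.subset_span ⟨u, w, rfl⟩
    set S := Submodule.span ℂ {z : L | ∃ u w : L, z = br u w} with hS
    have sh₀ : h₀ ∈ S := by
      have h : h₀ = (-a⁻¹) • br x h₀ := by
        rw [hbxh₀, smul_neg, neg_smul, neg_neg, smul_smul, inv_mul_cancel₀ ha, one_smul]
      rw [h]; exact Submodule.smul_mem _ _ (hself x h₀)
    have sK : ∀ k ∈ H₁, k ∈ S := fun k hk => by
      have h : k = a • br v k := by
        rw [hbvh k hk, smul_smul, mul_inv_cancel₀ ha, one_smul]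
      rw [h]; exact Submodule.smul_mem _ _ (hself v k)
    have sv : v ∈ S := by
      have h : v = a⁻¹ • br x v - (a⁻¹ * c₀) • h₀ - a⁻¹ • k₀ := by
        rw [hxv']; match_scalars <;> field_simp <;> ring
      rw [h]
      exact sub_mem (sub_mem (Submodule.smul_mem _ _ (hself x v))
        (Submodule.smul_mem _ _ sh₀)) (Submodule.smul_mem _ _ (sK k₀ hk₀))
    have sx : x ∈ S := by
      have h : x = br v h₀ - h₂ - a⁻¹ • h₀ := by rw [hbvh₀]; abel
      rw [h]
      exact sub_mem (sub_mem (hself v h₀) (sK h₂ hh₂)) (Submodule.smul_mem _ _ sh₀)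
    rw [eq_top_iff]
    intro z _
    obtain ⟨c, s, t, h, hh, rfl⟩ := hspan z
    exact add_mem (add_mem (add_mem (Submodule.smul_mem _ _ sh₀) (sK h hh))
      (Submodule.smul_mem _ _ sx)) (Submodule.smul_mem _ _ sv)
end

section
/- There is no nontrivial ω-Lie algebra L over ℂ with dim L ≥ 5 of the form L = H ⊕ ℂx ⊕ ℂy ⊕ ℂv (direct sum of subspaces, dim H ≥ 2) satisfying: [h,h']=0 for all h,h'∈H, [x,h]=0 and [y,h]=0 for all h∈H, [x,y]=y, ω(h,w)=0 and ω(x,w)=0 for all h∈H and w∈L, and ω(y,v)=1. -/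
/-- There is no nontrivial ω-Lie algebra over ℂ of dimension ≥ 5 of the
form `L = H ⊕ ℂx ⊕ ℂy ⊕ ℂv` (with `dim H ≥ 2`) satisfying `[H,H] = 0`,
`[x,H] = [y,H] = 0`, `[x,y] = y`, `ω(H,·) = 0`, `ω(x,·) = 0` and `ω(y,v) = 1`. -/
theorem stmt_7
    (L : Type*) [AddCommGroup L] [Module ℂ L] [FiniteDimensional ℂ L]
    (br : L →ₗ[ℂ] L →ₗ[ℂ] L) (ω : L →ₗ[ℂ] L →ₗ[ℂ] ℂ)
    (hskew : ∀ u v : L, ω u v = -ω v u)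
    (hanti : ∀ u v : L, br u v = -br v u)
    (hjac : ∀ u v w : L, br (br u v) w + br (br v w) u + br (br w u) v
      = ω u v • w + ω v w • u + ω w u • v)
    (hnt : ∃ u w : L, ω u w ≠ 0)
    (hdim : 5 ≤ Module.finrank ℂ L)
    (H : Submodule ℂ L) (x y v : L)
    (hdimH : 2 ≤ Module.finrank ℂ H)
    (hspan : ∀ z : L, ∃ h ∈ H, ∃ s t u : ℂ, z = h + s • x + t • y + u • v)
    (hxH : x ∉ H)
    (hyH : y ∉ H ⊔ Submodule.span ℂ {x})
    (hvH : v ∉ H ⊔ Submodule.span ℂ {x} ⊔ Submodule.span ℂ {y})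
    (habH : ∀ h ∈ H, ∀ h' ∈ H, br h h' = 0)
    (hxh : ∀ h ∈ H, br x h = 0)
    (hyh : ∀ h ∈ H, br y h = 0)
    (hxy : br x y = y)
    (hωH : ∀ h ∈ H, ∀ w : L, ω h w = 0)
    (hωx : ∀ w : L, ω x w = 0)
    (hωyv : ω y v = 1) :
    False := by
  classical
  -- basic consequences
  have hhx : ∀ h ∈ H, br h x = 0 := fun h hh => by rw [hanti, hxh h hh, neg_zero]
  have hhy : ∀ h ∈ H, br h y = 0 := fun h hh => by rw [hanti, hyh h hh, neg_zero]
  have hbrself : ∀ u : L, br u u = 0 := by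
    intro u
    have h := hanti u u
    have h2 : (2:ℂ) • br u u = 0 := by
      rw [two_smul]; nth_rewrite 2 [h]; exact add_neg_cancel _
    exact (smul_eq_zero.mp h2).resolve_left (by norm_num)
  have hωself : ∀ u : L, ω u u = 0 := by
    intro u
    have h := hskew u u
    linear_combination h / 2
  have hx0 : x ≠ 0 := fun h => hxH (h ▸ H.zero_mem)
  have hωyx : ω y x = 0 := by rw [hskew, hωx, neg_zero]
  have hωvx : ω v x = 0 := by rw [hskew, hωx, neg_zero]
  -- ω y h = 0 for h ∈ H
  have hωyh : ∀ h ∈ H, ω y h = 0 := by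
    intro h hh
    have j := hjac x y h
    rw [hxy, hyh h hh, hanti h x, hxh h hh, hωx y, hωH h hh x] at j
    simp only [neg_zero, map_zero, LinearMap.zero_apply, add_zero, zero_add, zero_smul] at j
    rcases smul_eq_zero.mp j.symm with h1 | h1
    · exact h1
    · exact absurd h1 hx0
  -- extraction of the v-coefficient via ω y
  have hωy : ∀ h : L, h ∈ H → ∀ s t u : ℂ, ω y (h + s • x + t • y + u • v) = u := by
    intro h hh s t u
    simp [hωyh h hh, hωyx, hωself, hωyv]
  -- bracket expansions
  have hbrx : ∀ h : L, h ∈ H → ∀ s t u : ℂ,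
      br (h + s • x + t • y + u • v) x = -(t • y) + u • br v x := by
    intro h hh s t u
    simp only [map_add, map_smul, LinearMap.add_apply, LinearMap.smul_apply,
      hhx h hh, hbrself, hanti y x, hxy]
    simp
  have hbry : ∀ h : L, h ∈ H → ∀ s t u : ℂ,
      br (h + s • x + t • y + u • v) y = s • y + u • br v y := by
    intro h hh s t u
    simp only [map_add, map_smul, LinearMap.add_apply, LinearMap.smul_apply,
      hhy h hh, hbrself, hxy]
    simp
  have lemA : ∀ z : L, ω y (br z x) = ω y z * ω y (br v x) := by
    intro z
    obtain ⟨h, hh, s, t, u, rfl⟩ := hspan z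
    rw [hbrx h hh s t u, hωy h hh s t u]
    simp [hωself, mul_comm]
  have lemB : ∀ z : L, ω y (br z y) = ω y z * ω y (br v y) := by
    intro z
    obtain ⟨h, hh, s, t, u, rfl⟩ := hspan z
    rw [hbry h hh s t u, hωy h hh s t u]
    simp [hωself, mul_comm]
  -- c' = ω y (br v y) = 0
  have hc' : ω y (br v y) = 0 := by
    have j := hjac x y v
    rw [hxy] at j
    have j2 := congrArg (ω y) j
    rw [map_add, map_add, lemA (br y v), lemB (br v x)] at j2
    have h1 : ω y (br y v) = - ω y (br v y) := by rw [hanti y v]; simp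
    rw [h1] at j2
    have h2 : ω y (ω x y • v + ω y v • x + ω v x • y) = 0 := by
      rw [hωx y, hωvx]
      simp [hωyx]
    rw [h2] at j2
    linear_combination -j2
  -- decompose br v y
  obtain ⟨q, hq, a', b', c', hvy⟩ := hspan (br v y)
  have hc'0 : c' = 0 := by
    have h1 := hωy q hq a' b' c'
    rw [← hvy, hc'] at h1
    exact h1.symm
  have hvy' : br v y = q + a' • x + b' • y := by
    rw [hvy, hc'0]; simp
  -- every element of H is a multiple of q
  have hmul : ∀ h ∈ H, ∃ c : ℂ, h = c • q := by
    intro h hh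
    obtain ⟨p, hp, a, b, c, hvh⟩ := hspan (br v h)
    have j := hjac y h v
    rw [hyh h hh, hωyh h hh, hωH h hh v] at j
    have hωvy : ω v y = -1 := by rw [hskew, hωyv]
    rw [hωvy] at j
    have e1 : br (br h v) y = -(a • y) - c • (q + a' • x + b' • y) := by
      rw [hanti h v, hvh]
      simp only [map_neg, map_add, map_smul, LinearMap.neg_apply, LinearMap.add_apply,
        LinearMap.smul_apply, hhy p hp, hbrself, hxy, hvy']
      simp
      abel
    have e2 : br (br v y) h = 0 := by
      rw [hvy']
      simp only [map_add, map_smul, LinearMap.add_apply, LinearMap.smul_apply,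
        habH q hq h hh, hxh h hh, hyh h hh]
      simp
    rw [e1, e2] at j
    simp only [map_zero, LinearMap.zero_apply, zero_add, add_zero, zero_smul, neg_smul,
      one_smul] at j
    -- j : -(a • y) - c • (q + a' • x + b' • y) + 0? = -h  (roughly)
    have key : h - c • q = (c * a') • x + (a + c * b') • y := by
      linear_combination (norm := module) j
    have hH1 : h - c • q ∈ H := sub_mem hh (H.smul_mem _ hq)
    have hy0 : a + c * b' = 0 := by
      by_contra hne
      apply hyH
      have hyeq : y = (a + c * b')⁻¹ • (h - c • q - (c * a') • x) := by
        rw [key]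
        rw [add_sub_cancel_left, smul_smul, inv_mul_cancel₀ hne, one_smul]
      rw [hyeq]
      refine Submodule.smul_mem _ _ (Submodule.sub_mem _ (Submodule.mem_sup_left hH1) ?_)
      exact Submodule.mem_sup_right (Submodule.smul_mem _ _ (Submodule.mem_span_singleton_self x))
    have hx0' : c * a' = 0 := by
      by_contra hne
      apply hxH
      have hxeq : x = (c * a')⁻¹ • (h - c • q) := by
        rw [key, hy0, zero_smul, add_zero, smul_smul, inv_mul_cancel₀ hne, one_smul]
      rw [hxeq]
      exact H.smul_mem _ hH1
    refine ⟨c, ?_⟩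
    have h0 : h - c • q = 0 := by rw [key, hy0, hx0', zero_smul, zero_smul, add_zero]
    exact sub_eq_zero.mp h0
  -- conclude dim H ≤ 1
  have hle : H ≤ Submodule.span ℂ {q} := by
    intro h hh
    obtain ⟨c, rfl⟩ := hmul h hh
    exact Submodule.smul_mem _ _ (Submodule.mem_span_singleton_self q)
  have h1 : Module.finrank ℂ H ≤ Module.finrank ℂ (Submodule.span ℂ ({q} : Set L)) :=
    Submodule.finrank_mono hle
  have h2 : Module.finrank ℂ (Submodule.span ℂ ({q} : Set L)) ≤ 1 := by
    by_cases hq0 : q = 0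
    · rw [hq0, Submodule.span_zero_singleton]; simp
    · rw [finrank_span_singleton hq0]
  omega
end

section
/- Let L be a nontrivial ω-Lie algebra over ℂ of the form L = H ⊕ ℂx ⊕ ℂy ⊕ ℂa where [h,h']=0 for all h,h'∈H, [a,h]=h for all h∈H, [x,h]=f(h)∈H and [y,h]=g(h)∈H for all h∈H (f, g linear maps H→H), ω(h,w)=0 and ω(a,w)=0 for all h∈H, w∈L, and ω(x,y)=1. Suppose [x,a]=h₁+b₁x+b₂y+b₃a and [y,a]=h₂+c₁y+c₂a with h₁,h₂∈H and b₁,b₂,b₃,c₁,c₂∈ℂ. Then for all h∈H: c₁g(h)+c₂h=0 and b₁f(h)+b₂g(h)+b₃h=0. -/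
/-- In a nontrivial ω-Lie algebra `L = H ⊕ ℂx ⊕ ℂy ⊕ ℂa` over ℂ with
`[H,H] = 0`, `[a,h] = h`, `[x,h] = f(h) ∈ H`, `[y,h] = g(h) ∈ H`, `ω(H,·) = 0`,
`ω(a,·) = 0`, `ω(x,y) = 1`, if `[x,a] = h₁ + b₁x + b₂y + b₃a` and
`[y,a] = h₂ + c₁y + c₂a`, then for all `h ∈ H`:
`c₁ g(h) + c₂ h = 0` and `b₁ f(h) + b₂ g(h) + b₃ h = 0`. -/
theorem stmt_8
    (L : Type*) [AddCommGroup L] [Module ℂ L] [FiniteDimensional ℂ L]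
    (br : L →ₗ[ℂ] L →ₗ[ℂ] L) (ω : L →ₗ[ℂ] L →ₗ[ℂ] ℂ)
    (hskew : ∀ u v : L, ω u v = -ω v u)
    (hanti : ∀ u v : L, br u v = -br v u)
    (hjac : ∀ u v w : L, br (br u v) w + br (br v w) u + br (br w u) v
      = ω u v • w + ω v w • u + ω w u • v)
    (hnt : ∃ u w : L, ω u w ≠ 0)
    (H : Submodule ℂ L) (x y a : L) (f g : L →ₗ[ℂ] L)
    (hspan : ∀ z : L, ∃ h ∈ H, ∃ s t u : ℂ, z = h + s • x + t • y + u • a)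
    (hxH : x ∉ H)
    (hyH : y ∉ H ⊔ Submodule.span ℂ {x})
    (haH : a ∉ H ⊔ Submodule.span ℂ {x} ⊔ Submodule.span ℂ {y})
    (habH : ∀ h ∈ H, ∀ h' ∈ H, br h h' = 0)
    (hah : ∀ h ∈ H, br a h = h)
    (hf : ∀ h ∈ H, f h ∈ H) (hg : ∀ h ∈ H, g h ∈ H)
    (hxh : ∀ h ∈ H, br x h = f h)
    (hyh : ∀ h ∈ H, br y h = g h)
    (hωH : ∀ h ∈ H, ∀ w : L, ω h w = 0)
    (hωa : ∀ w : L, ω a w = 0)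
    (hωxy : ω x y = 1)
    (h₁ h₂ : L) (hh₁ : h₁ ∈ H) (hh₂ : h₂ ∈ H)
    (b₁ b₂ b₃ c₁ c₂ : ℂ)
    (hxa : br x a = h₁ + b₁ • x + b₂ • y + b₃ • a)
    (hya : br y a = h₂ + c₁ • y + c₂ • a) :
    ∀ h ∈ H, c₁ • g h + c₂ • h = 0 ∧ b₁ • f h + b₂ • g h + b₃ • h = 0 := by
  intro h hH
  have hgh := hg h hH
  have hfh := hf h hH
  have hωya : ω y a = 0 := by rw [hskew, hωa, neg_zero]
  have hωxa : ω x a = 0 := by rw [hskew, hωa, neg_zero]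
  constructor
  · have hj := hjac y a h
    rw [hya] at hj
    have e1 : br (h₂ + c₁ • y + c₂ • a) h = c₁ • g h + c₂ • h := by
      simp [habH h₂ hh₂ h hH, hyh h hH, hah h hH]
    have e2 : br (br a h) y = -(g h) := by
      rw [hah h hH, hanti, hyh h hH]
    have e3 : br (br h y) a = g h := by
      rw [hanti h y, hyh h hH]
      simp [hanti (g h) a, hah (g h) hgh]
    rw [e1, e2, e3, hωya, hωa, hωH h hH] at hj
    simpa using hj
  · have hj := hjac x a h
    rw [hxa] at hj
    have e1 : br (h₁ + b₁ • x + b₂ • y + b₃ • a) h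
        = b₁ • f h + b₂ • g h + b₃ • h := by
      simp [habH h₁ hh₁ h hH, hxh h hH, hyh h hH, hah h hH, add_assoc]
    have e2 : br (br a h) x = -(f h) := by
      rw [hah h hH, hanti, hxh h hH]
    have e3 : br (br h x) a = f h := by
      rw [hanti h x, hxh h hH]
      simp [hanti (f h) a, hah (f h) hfh]
    rw [e1, e2, e3, hωxa, hωa, hωH h hH] at hj
    simpa [add_assoc] using hj
end

section
/- Let L be a nontrivial ω-Lie algebra over ℂ with dim L ≥ 5, of the form L = H ⊕ ℂx ⊕ ℂy ⊕ ℂa where [h,h']=0 for all h,h'∈H, [a,h]=h for all h∈H, [x,h]=f(h)∈H and [y,h]=g(h)∈H for all h∈H, ω(h,w)=0 and ω(a,w)=0 for all h∈H, w∈L, and ω(x,y)=1. Suppose [x,a]=h₁+b₁x+b₂y+b₃a, [y,a]=h₂+c₂a (i.e. c₁=0), and [x,y]=h₃+d₁x+d₂y+d₃a. Then c₂=0, b₁=−1, f(h)=b₂g(h)+b₃h for all h∈H, d₂=−b₂d₁, and d₃=1−b₃d₁. -/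
/-- Derivation of the NP₂-type algebras. In a nontrivial ω-Lie algebra
`L = H ⊕ ℂx ⊕ ℂy ⊕ ℂa` over ℂ of dimension ≥ 5 with `[H,H] = 0`, `[a,h] = h`,
`[x,h] = f(h) ∈ H`, `[y,h] = g(h) ∈ H`, `ω(H,·) = 0`, `ω(a,·) = 0`, `ω(x,y) = 1`,
if `[x,a] = h₁ + b₁x + b₂y + b₃a`, `[y,a] = h₂ + c₂a` (i.e. `c₁ = 0`) and
`[x,y] = h₃ + d₁x + d₂y + d₃a`, then `c₂ = 0`, `b₁ = −1`,
`f(h) = b₂ g(h) + b₃ h` for all `h ∈ H`, `d₂ = −b₂d₁` and `d₃ = 1 − b₃d₁`. -/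
theorem stmt_9
    (L : Type*) [AddCommGroup L] [Module ℂ L] [FiniteDimensional ℂ L]
    (br : L →ₗ[ℂ] L →ₗ[ℂ] L) (ω : L →ₗ[ℂ] L →ₗ[ℂ] ℂ)
    (hskew : ∀ u v : L, ω u v = -ω v u)
    (hanti : ∀ u v : L, br u v = -br v u)
    (hjac : ∀ u v w : L, br (br u v) w + br (br v w) u + br (br w u) v
      = ω u v • w + ω v w • u + ω w u • v)
    (hnt : ∃ u w : L, ω u w ≠ 0)
    (hdim : 5 ≤ Module.finrank ℂ L)
    (H : Submodule ℂ L) (x y a : L) (f g : L →ₗ[ℂ] L)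
    (hspan : ∀ z : L, ∃ h ∈ H, ∃ s t u : ℂ, z = h + s • x + t • y + u • a)
    (hxH : x ∉ H)
    (hyH : y ∉ H ⊔ Submodule.span ℂ {x})
    (haH : a ∉ H ⊔ Submodule.span ℂ {x} ⊔ Submodule.span ℂ {y})
    (habH : ∀ h ∈ H, ∀ h' ∈ H, br h h' = 0)
    (hah : ∀ h ∈ H, br a h = h)
    (hf : ∀ h ∈ H, f h ∈ H) (hg : ∀ h ∈ H, g h ∈ H)
    (hxh : ∀ h ∈ H, br x h = f h)
    (hyh : ∀ h ∈ H, br y h = g h)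
    (hωH : ∀ h ∈ H, ∀ w : L, ω h w = 0)
    (hωa : ∀ w : L, ω a w = 0)
    (hωxy : ω x y = 1)
    (h₁ h₂ h₃ : L) (hh₁ : h₁ ∈ H) (hh₂ : h₂ ∈ H) (hh₃ : h₃ ∈ H)
    (b₁ b₂ b₃ c₂ d₁ d₂ d₃ : ℂ)
    (hxa : br x a = h₁ + b₁ • x + b₂ • y + b₃ • a)
    (hya : br y a = h₂ + c₂ • a)
    (hxy : br x y = h₃ + d₁ • x + d₂ • y + d₃ • a) :
    c₂ = 0 ∧ b₁ = -1 ∧ (∀ h ∈ H, f h = b₂ • g h + b₃ • h) ∧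
    d₂ = -(b₂ * d₁) ∧ d₃ = 1 - b₃ * d₁ := by
  classical
  -- bracket of an element with itself is zero
  have self0 : ∀ u : L, br u u = 0 := by
    intro u
    have h := hanti u u
    have h2 : (2 : ℂ) • br u u = 0 := by
      rw [two_smul]
      nth_rewrite 2 [h]
      exact add_neg_cancel _
    exact (smul_eq_zero.mp h2).resolve_left (by norm_num)
  -- a nonzero element of H exists
  obtain ⟨h₀, hh₀, hh₀0⟩ : ∃ h₀, h₀ ∈ H ∧ h₀ ≠ 0 := by
    by_contra hc
    push_neg at hc
    have hle : (⊤ : Submodule ℂ L) ≤ Submodule.span ℂ ({x, y, a} : Set L) := by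
      intro z _
      obtain ⟨h, hh, s, t, u, hz⟩ := hspan z
      rw [hz, hc h hh, zero_add]
      have mx : x ∈ Submodule.span ℂ ({x, y, a} : Set L) := Submodule.subset_span (by simp)
      have my : y ∈ Submodule.span ℂ ({x, y, a} : Set L) := Submodule.subset_span (by simp)
      have ma : a ∈ Submodule.span ℂ ({x, y, a} : Set L) := Submodule.subset_span (by simp)
      exact add_mem (add_mem (Submodule.smul_mem _ _ mx) (Submodule.smul_mem _ _ my))
        (Submodule.smul_mem _ _ ma)
    have h2 := Submodule.finrank_mono hle
    rw [finrank_top] at h2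
    have h3 : Submodule.span ℂ ({x, y, a} : Set L)
        = Submodule.span ℂ (({x, y, a} : Finset L) : Set L) := by congr 1; simp
    rw [h3] at h2
    have h4 := h2.trans (finrank_span_finset_le_card _)
    have h5 := Finset.card_insert_le x ({y, a} : Finset L)
    have h6 := Finset.card_insert_le y ({a} : Finset L)
    simp at h5 h6
    omega
  have hgh₀ := hg h₀ hh₀
  -- uniqueness of y- and a-coefficients
  have huniq : ∀ hh ∈ H, ∀ s t u : ℂ, hh + s • x + t • y + u • a = 0 → t = 0 ∧ u = 0 := by
    intro hh hhH s t u heq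
    have hu : u = 0 := by
      by_contra hu
      apply haH
      have hua : u • a = -(hh + s • x + t • y) := by
        linear_combination (norm := module) heq
      have ha' : a = u⁻¹ • (-(hh + s • x + t • y)) := by
        rw [← hua, smul_smul, inv_mul_cancel₀ hu, one_smul]
      rw [ha']
      refine Submodule.smul_mem _ _ (neg_mem (add_mem (add_mem ?_ ?_) ?_))
      · exact Submodule.mem_sup_left (Submodule.mem_sup_left hhH)
      · exact Submodule.mem_sup_left (Submodule.mem_sup_right
          (Submodule.smul_mem _ _ (Submodule.mem_span_singleton_self x)))
      · exact Submodule.mem_sup_right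
          (Submodule.smul_mem _ _ (Submodule.mem_span_singleton_self y))
    subst hu
    refine ⟨?_, rfl⟩
    by_contra ht
    apply hyH
    have hty : t • y = -(hh + s • x) := by
      linear_combination (norm := module) heq
    have hy' : y = t⁻¹ • (-(hh + s • x)) := by
      rw [← hty, smul_smul, inv_mul_cancel₀ ht, one_smul]
    rw [hy']
    refine Submodule.smul_mem _ _ (neg_mem (add_mem ?_ ?_))
    · exact Submodule.mem_sup_left hhH
    · exact Submodule.mem_sup_right
        (Submodule.smul_mem _ _ (Submodule.mem_span_singleton_self x))
  -- ω facts
  have Wya : ω y a = 0 := by rw [hskew y a, hωa y, neg_zero]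
  have Wxa : ω x a = 0 := by rw [hskew x a, hωa x, neg_zero]
  -- STEP 1 : c₂ = 0, from Jacobi (y, a, h₀)
  have hc₂ : c₂ = 0 := by
    have A1 : br h₂ h₀ = 0 := habH _ hh₂ _ hh₀
    have A2 : br a h₀ = h₀ := hah _ hh₀
    have A3 : br h₀ y = -g h₀ := by rw [hanti h₀ y, hyh _ hh₀]
    have A4 : br (g h₀) a = -g h₀ := by rw [hanti (g h₀) a, hah _ hgh₀]
    have W2 : ω a h₀ = 0 := hωa h₀
    have W3 : ω h₀ y = 0 := hωH _ hh₀ y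
    have j := hjac y a h₀
    simp only [hya, A1, A2, A3, A4, Wya, W2, W3, map_add, map_smul, map_neg,
      LinearMap.add_apply, LinearMap.smul_apply, LinearMap.neg_apply,
      zero_smul, smul_neg, zero_add, add_zero, neg_neg] at j
    have e1 : c₂ • h₀ = 0 := by linear_combination (norm := module) j
    exact (smul_eq_zero.mp e1).resolve_right hh₀0
  have hya2 : br y a = h₂ := by rw [hya, hc₂, zero_smul, add_zero]
  -- STEP 2 : key linear identity from Jacobi (x, a, h), for every h ∈ H
  have e2 : ∀ h ∈ H, b₁ • f h + b₂ • g h + b₃ • h = 0 := by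
    intro h hH
    have hfh := hf h hH
    have B1 : br h₁ h = 0 := habH _ hh₁ _ hH
    have B2 : br x h = f h := hxh _ hH
    have B3 : br y h = g h := hyh _ hH
    have B4 : br a h = h := hah _ hH
    have B5 : br h x = -f h := by rw [hanti h x, hxh _ hH]
    have B6 : br (f h) a = -f h := by rw [hanti (f h) a, hah _ hfh]
    have W2 : ω a h = 0 := hωa h
    have W3 : ω h x = 0 := hωH _ hH x
    have j := hjac x a h
    simp only [hxa, B1, B2, B3, B4, B5, B6, Wxa, W2, W3, map_add, map_smul, map_neg,
      LinearMap.add_apply, LinearMap.smul_apply, LinearMap.neg_apply,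
      zero_smul, smul_neg, zero_add, add_zero, neg_neg] at j
    linear_combination (norm := module) j
  -- STEP 3 : identity from Jacobi (x, y, h), for every h ∈ H
  have e3 : ∀ h ∈ H, d₁ • f h + d₂ • g h + d₃ • h - f (g h) + g (f h) = h := by
    intro h hH
    have hfh := hf h hH
    have hgh := hg h hH
    have C1 : br h₃ h = 0 := habH _ hh₃ _ hH
    have C2 : br x h = f h := hxh _ hH
    have C3 : br y h = g h := hyh _ hH
    have C4 : br a h = h := hah _ hH
    have C5 : br (g h) x = -f (g h) := by rw [hanti (g h) x, hxh _ hgh]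
    have C6 : br h x = -f h := by rw [hanti h x, hxh _ hH]
    have C7 : br (f h) y = -g (f h) := by rw [hanti (f h) y, hyh _ hfh]
    have W2 : ω y h = 0 := by rw [hskew y h, hωH _ hH y, neg_zero]
    have W3 : ω h x = 0 := hωH _ hH x
    have j := hjac x y h
    simp only [hxy, hωxy, C1, C2, C3, C4, C5, C6, C7, W2, W3, map_add, map_smul, map_neg,
      LinearMap.add_apply, LinearMap.smul_apply, LinearMap.neg_apply,
      zero_smul, one_smul, smul_neg, zero_add, add_zero, neg_neg] at j
    linear_combination (norm := module) j
  -- STEP 4 : coefficient identities from Jacobi (x, y, a)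
  have D1 : br h₃ a = -h₃ := by rw [hanti h₃ a, hah _ hh₃]
  have D2 : br a a = 0 := self0 a
  have D3 : br h₂ x = -f h₂ := by rw [hanti h₂ x, hxh _ hh₂]
  have D4 : br a x = -(h₁ + b₁ • x + b₂ • y + b₃ • a) := by rw [hanti a x, hxa]
  have D5 : br h₁ y = -g h₁ := by rw [hanti h₁ y, hyh _ hh₁]
  have D6 : br y y = 0 := self0 y
  have D7 : br a y = -h₂ := by rw [hanti a y, hya2]
  have W4 : ω a x = 0 := hωa x
  have j4 := hjac x y a
  simp only [hxy, hya2, hxa, hωxy, D1, D2, D3, D4, D5, D6, D7, Wya, W4,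
    map_add, map_smul, map_neg, LinearMap.add_apply, LinearMap.smul_apply,
    LinearMap.neg_apply, zero_smul, one_smul, smul_neg, smul_zero,
    zero_add, add_zero, neg_neg] at j4
  have e4 : (d₁ • h₁ + d₂ • h₂ + g h₁ + b₃ • h₂ - h₃ - b₁ • h₃ - f h₂)
      + (0 : ℂ) • x + (d₁ * b₂ - b₁ * d₂) • y + (d₁ * b₃ - b₁ * d₃ - 1) • a = 0 := by
    linear_combination (norm := module) j4
  have hmem : (d₁ • h₁ + d₂ • h₂ + g h₁ + b₃ • h₂ - h₃ - b₁ • h₃ - f h₂) ∈ H := by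
    refine sub_mem (sub_mem (sub_mem (add_mem (add_mem (add_mem ?_ ?_) ?_) ?_) hh₃) ?_) ?_
    · exact Submodule.smul_mem _ _ hh₁
    · exact Submodule.smul_mem _ _ hh₂
    · exact hg _ hh₁
    · exact Submodule.smul_mem _ _ hh₂
    · exact Submodule.smul_mem _ _ hh₃
    · exact hf _ hh₂
  obtain ⟨hyeq, haeq⟩ := huniq _ hmem _ _ _ e4
  -- STEP 5 : b₁ = -1
  have e2a := e2 h₀ hh₀
  have e2b := e2 (g h₀) hgh₀
  have e3a := e3 h₀ hh₀
  have egf : b₁ • g (f h₀) + b₂ • g (g h₀) + b₃ • g h₀ = 0 := by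
    have hgl : g (b₁ • f h₀ + b₂ • g h₀ + b₃ • h₀) = g (0 : L) := by rw [e2a]
    simp only [map_add, map_smul, map_zero] at hgl
    linear_combination (norm := module) hgl
  have key : (b₁ * d₂ - d₁ * b₂) • g h₀ + (b₁ * d₃ - d₁ * b₃ - b₁) • h₀ = 0 := by
    linear_combination (norm := module) b₁ • e3a - d₁ • e2a + e2b - egf
  have hc1 : (b₁ * d₂ - d₁ * b₂) = 0 := by linear_combination -hyeq
  rw [hc1, zero_smul, zero_add] at key
  have hb1' : b₁ * d₃ - d₁ * b₃ - b₁ = 0 :=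
    (smul_eq_zero.mp key).resolve_right hh₀0
  have hb1 : b₁ = -1 := by linear_combination -hb1' - haeq
  refine ⟨hc₂, hb1, ?_, ?_, ?_⟩
  · intro h hH
    have e2h := e2 h hH
    rw [hb1] at e2h
    linear_combination (norm := module) -e2h
  · linear_combination hyeq + d₂ * hb1
  · linear_combination haeq + d₃ * hb1
end

section
/- Let L be a nontrivial ω-Lie algebra over ℂ with dim L ≥ 5, of the form L = H ⊕ ℂx ⊕ ℂy ⊕ ℂa where [h,h']=0 for all h,h'∈H, [a,h]=h for all h∈H, [x,h]=f(h)∈H and [y,h]=g(h)∈H for all h∈H, ω(h,w)=0 and ω(a,w)=0 for all h∈H, w∈L, and ω(x,y)=1. Suppose [x,a]=h₁+b₂y+b₃a (i.e. its x-component is zero) and [y,a]=h₂+c₁y+c₂a with c₁≠0. Then g(h)=−c₁⁻¹c₂h for all h∈H, b₂c₂=b₃c₁, c₁=−1, and there exist y' = y + c₁⁻¹c₂ a, d₂ ∈ ℂ, and h₃ ∈ H such that L = H ⊕ ℂx ⊕ ℂy' ⊕ ℂa with [y',h]=0 for all h∈H, [y',a]=h₂−y', [x,a]=h₁+b₂y',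 [x,y']=h₃+d₂y'+a, ω(x,y')=1, and f(h₂)=d₂h₂. -/
/-- Independence of `x, y, a` modulo `H`. -/
lemma stmt10_aux_indep {L : Type*} [AddCommGroup L] [Module ℂ L]
    (H : Submodule ℂ L) (x y a : L)
    (hxH : x ∉ H)
    (hyH : y ∉ H ⊔ Submodule.span ℂ {x})
    (haH : a ∉ H ⊔ Submodule.span ℂ {x} ⊔ Submodule.span ℂ {y})
    {h : L} (hh : h ∈ H) (s t u : ℂ)
    (heq : h + s • x + t • y + u • a = 0) :
    s = 0 ∧ t = 0 ∧ u = 0 ∧ h = 0 := by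
  have memx : s • x ∈ H ⊔ Submodule.span ℂ {x} :=
    Submodule.mem_sup_right (Submodule.smul_mem _ s (Submodule.mem_span_singleton_self x))
  have hu : u = 0 := by
    by_contra hu
    apply haH
    have e1 : u • a = -(h + s • x + t • y) := (neg_eq_of_add_eq_zero_right heq).symm
    have e2 : a = u⁻¹ • (-(h + s • x + t • y)) := by
      rw [← e1, smul_smul, inv_mul_cancel₀ hu, one_smul]
    rw [e2]
    refine Submodule.smul_mem _ _ (Submodule.neg_mem _ ?_)
    refine add_mem (add_mem ?_ ?_) ?_
    · exact Submodule.mem_sup_left (Submodule.mem_sup_left hh)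
    · exact Submodule.mem_sup_left memx
    · exact Submodule.mem_sup_right
        (Submodule.smul_mem _ t (Submodule.mem_span_singleton_self y))
  subst hu
  rw [zero_smul, add_zero] at heq
  have ht : t = 0 := by
    by_contra ht
    apply hyH
    have e1 : t • y = -(h + s • x) := (neg_eq_of_add_eq_zero_right heq).symm
    have e2 : y = t⁻¹ • (-(h + s • x)) := by
      rw [← e1, smul_smul, inv_mul_cancel₀ ht, one_smul]
    rw [e2]
    refine Submodule.smul_mem _ _ (Submodule.neg_mem _ ?_)
    exact add_mem (Submodule.mem_sup_left hh) memx
  subst ht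
  rw [zero_smul, add_zero] at heq
  have hs : s = 0 := by
    by_contra hs
    apply hxH
    have e1 : s • x = -h := (neg_eq_of_add_eq_zero_right heq).symm
    have e2 : x = s⁻¹ • (-h) := by
      rw [← e1, smul_smul, inv_mul_cancel₀ hs, one_smul]
    rw [e2]
    exact Submodule.smul_mem _ _ (Submodule.neg_mem _ hh)
  subst hs
  rw [zero_smul, add_zero] at heq
  exact ⟨rfl, rfl, rfl, heq⟩

/-- Derivation of the NP₃-type algebras. In a nontrivial ω-Lie algebra
`L = H ⊕ ℂx ⊕ ℂy ⊕ ℂa` over ℂ of dimension ≥ 5 with `[H,H] = 0`, `[a,h] = h`,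
`[x,h] = f(h) ∈ H`, `[y,h] = g(h) ∈ H`, `ω(H,·) = 0`, `ω(a,·) = 0`, `ω(x,y) = 1`,
if `[x,a] = h₁ + b₂y + b₃a` (zero `x`-component) and `[y,a] = h₂ + c₁y + c₂a` with
`c₁ ≠ 0`, then `g(h) = −c₁⁻¹c₂ h` for all `h`, `b₂c₂ = b₃c₁`, `c₁ = −1`, and with
`y' = y + c₁⁻¹c₂ a` there are `d₂ ∈ ℂ`, `h₃ ∈ H` so that `L = H ⊕ ℂx ⊕ ℂy' ⊕ ℂa`,
`[y',H] = 0`, `[y',a] = h₂ − y'`, `[x,a] = h₁ + b₂y'`, `[x,y'] = h₃ + d₂y' + a`,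
`ω(x,y') = 1` and `f(h₂) = d₂h₂`. -/
theorem stmt_10
    (L : Type*) [AddCommGroup L] [Module ℂ L] [FiniteDimensional ℂ L]
    (br : L →ₗ[ℂ] L →ₗ[ℂ] L) (ω : L →ₗ[ℂ] L →ₗ[ℂ] ℂ)
    (hskew : ∀ u v : L, ω u v = -ω v u)
    (hanti : ∀ u v : L, br u v = -br v u)
    (hjac : ∀ u v w : L, br (br u v) w + br (br v w) u + br (br w u) v
      = ω u v • w + ω v w • u + ω w u • v)
    (hnt : ∃ u w : L, ω u w ≠ 0)
    (hdim : 5 ≤ Module.finrank ℂ L)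
    (H : Submodule ℂ L) (x y a : L) (f g : L →ₗ[ℂ] L)
    (hspan : ∀ z : L, ∃ h ∈ H, ∃ s t u : ℂ, z = h + s • x + t • y + u • a)
    (hxH : x ∉ H)
    (hyH : y ∉ H ⊔ Submodule.span ℂ {x})
    (haH : a ∉ H ⊔ Submodule.span ℂ {x} ⊔ Submodule.span ℂ {y})
    (habH : ∀ h ∈ H, ∀ h' ∈ H, br h h' = 0)
    (hah : ∀ h ∈ H, br a h = h)
    (hf : ∀ h ∈ H, f h ∈ H) (hg : ∀ h ∈ H, g h ∈ H)
    (hxh : ∀ h ∈ H, br x h = f h)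
    (hyh : ∀ h ∈ H, br y h = g h)
    (hωH : ∀ h ∈ H, ∀ w : L, ω h w = 0)
    (hωa : ∀ w : L, ω a w = 0)
    (hωxy : ω x y = 1)
    (h₁ h₂ : L) (hh₁ : h₁ ∈ H) (hh₂ : h₂ ∈ H)
    (b₂ b₃ c₁ c₂ : ℂ) (hc₁ : c₁ ≠ 0)
    (hxa : br x a = h₁ + b₂ • y + b₃ • a)
    (hya : br y a = h₂ + c₁ • y + c₂ • a) :
    (∀ h ∈ H, g h = -((c₁⁻¹ * c₂) • h)) ∧
    b₂ * c₂ = b₃ * c₁ ∧ c₁ = -1 ∧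
    ∃ y' : L, y' = y + (c₁⁻¹ * c₂) • a ∧
      ∃ d₂ : ℂ, ∃ h₃ ∈ H,
        (∀ z : L, ∃ h ∈ H, ∃ s t u : ℂ, z = h + s • x + t • y' + u • a) ∧
        (∀ h ∈ H, br y' h = 0) ∧
        br y' a = h₂ - y' ∧
        br x a = h₁ + b₂ • y' ∧
        br x y' = h₃ + d₂ • y' + a ∧
        ω x y' = 1 ∧
        f h₂ = d₂ • h₂ := by
  classical
  -- basic ω facts
  have ωya : ω y a = 0 := by rw [hskew, hωa, neg_zero]
  have ωax : ω a x = 0 := hωa x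
  have ωxa : ω x a = 0 := by rw [hskew, hωa, neg_zero]
  -- trivial self-brackets
  have haa : br a a = 0 := by
    have h' : (2 : ℂ) • br a a = 0 := by
      rw [two_smul]; nth_rewrite 1 [hanti a a]; rw [neg_add_cancel]
    exact (smul_eq_zero.mp h').resolve_left two_ne_zero
  have hyy : br y y = 0 := by
    have h' : (2 : ℂ) • br y y = 0 := by
      rw [two_smul]; nth_rewrite 1 [hanti y y]; rw [neg_add_cancel]
    exact (smul_eq_zero.mp h').resolve_left two_ne_zero
  -- nonzero element of H
  obtain ⟨h₀, hh₀, hh₀0⟩ : ∃ h₀ ∈ H, h₀ ≠ 0 := by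
    by_contra hcon
    push_neg at hcon
    have htop : ∀ z : L, z ∈ Submodule.span ℂ ({x, y, a} : Set L) := by
      intro z
      obtain ⟨h, hh, s, t, u, hz⟩ := hspan z
      rw [hcon h hh, zero_add] at hz
      rw [hz]
      refine add_mem (add_mem ?_ ?_) ?_ <;>
        exact Submodule.smul_mem _ _ (Submodule.subset_span (by simp))
    have hle : Module.finrank ℂ L ≤ 3 := by
      have hset : ({x, y, a} : Set L) = (({x, y, a} : Finset L) : Set L) := by simp
      have h1 : Submodule.span ℂ (({x, y, a} : Finset L) : Set L) = ⊤ := by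
        rw [Submodule.eq_top_iff']; rw [hset] at htop; exact htop
      have h2 := finrank_span_finset_le_card (R := ℂ) ({x, y, a} : Finset L)
      rw [Set.finrank, h1, finrank_top] at h2
      calc Module.finrank ℂ L ≤ ({x, y, a} : Finset L).card := h2
        _ ≤ 3 := by
          apply le_trans (Finset.card_insert_le _ _)
          have := Finset.card_insert_le y ({a} : Finset L)
          simp at this ⊢; omega
    omega
  -- (1) the formula for g
  have hgH : ∀ h ∈ H, g h = -((c₁⁻¹ * c₂) • h) := by
    intro h hh
    have t1 : br (br y a) h = c₁ • g h + c₂ • h := by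
      rw [hya]
      simp only [map_add, map_smul, LinearMap.add_apply, LinearMap.smul_apply,
        habH h₂ hh₂ h hh, hyh h hh, hah h hh]
      module
    have t2 : br (br a h) y = -(g h) := by
      rw [hah h hh, hanti h y, hyh h hh]
    have t3 : br (br h y) a = g h := by
      rw [hanti h y, hyh h hh, map_neg, LinearMap.neg_apply, hanti (g h) a,
        hah (g h) (hg h hh), neg_neg]
    have J := hjac y a h
    rw [t1, t2, t3, ωya, hωa h, hωH h hh y] at J
    have J' : c₁ • g h + c₂ • h = 0 := by
      have : c₁ • g h + c₂ • h = c₁ • g h + c₂ • h + -g h + g h := by module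
      rw [this, J]; module
    have h5 : c₁ • g h = c₁ • (-((c₁⁻¹ * c₂) • h)) := by
      rw [eq_neg_of_add_eq_zero_left J']
      match_scalars
      field_simp
    exact smul_right_injective L hc₁ h5
  refine ⟨hgH, ?_⟩
  -- (2) b₂c₂ = b₃c₁
  have hb23 : b₂ * c₂ = b₃ * c₁ := by
    have t1 : br (br x a) h₀ = b₂ • g h₀ + b₃ • h₀ := by
      rw [hxa]
      simp only [map_add, map_smul, LinearMap.add_apply, LinearMap.smul_apply,
        habH h₁ hh₁ h₀ hh₀, hyh h₀ hh₀, hah h₀ hh₀]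
      module
    have t2 : br (br a h₀) x = -(f h₀) := by
      rw [hah h₀ hh₀, hanti h₀ x, hxh h₀ hh₀]
    have t3 : br (br h₀ x) a = f h₀ := by
      rw [hanti h₀ x, hxh h₀ hh₀, map_neg, LinearMap.neg_apply, hanti (f h₀) a,
        hah (f h₀) (hf h₀ hh₀), neg_neg]
    have J := hjac x a h₀
    rw [t1, t2, t3, ωxa, hωa h₀, hωH h₀ hh₀ x] at J
    have J' : b₂ • g h₀ + b₃ • h₀ = 0 := by
      have : b₂ • g h₀ + b₃ • h₀ = b₂ • g h₀ + b₃ • h₀ + -f h₀ + f h₀ := by module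
      rw [this, J]; module
    rw [hgH h₀ hh₀] at J'
    have J'' : (b₃ - b₂ * (c₁⁻¹ * c₂)) • h₀ = 0 := by
      rw [sub_smul, mul_smul]; rw [← J']; module
    have hco : b₃ - b₂ * (c₁⁻¹ * c₂) = 0 := (smul_eq_zero.mp J'').resolve_right hh₀0
    field_simp at hco
    linear_combination -hco
  refine ⟨hb23, ?_⟩
  -- decompose br x y
  obtain ⟨k, hkH, p, q, r, hbxy⟩ := hspan (br x y)
  have hka : br k a = -k := by rw [hanti, hah k hkH]
  have T1 : br (br x y) a
      = (-k + p • h₁ + q • h₂) + (p*b₂ + q*c₁) • y + (p*b₃ + q*c₂) • a := by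
    rw [hbxy]
    simp only [map_add, map_smul, LinearMap.add_apply, LinearMap.smul_apply,
      hka, hxa, hya, haa]
    module
  have T2 : br (br y a) x
      = (-(f h₂) - c₁ • k - c₂ • h₁) + (-(c₁*p)) • x + (-(c₁*q) - c₂*b₂) • y
        + (-(c₁*r) - c₂*b₃) • a := by
    rw [hya]
    have e1 : br h₂ x = -(f h₂) := by rw [hanti, hxh h₂ hh₂]
    have e2 : br y x = -(br x y) := hanti y x
    have e3 : br a x = -(br x a) := hanti a x
    simp only [map_add, map_smul, LinearMap.add_apply, LinearMap.smul_apply,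
      e1, e2, e3, hbxy, hxa]
    module
  have T3 : br (br a x) y
      = (-((c₁⁻¹*c₂) • h₁) + b₃ • h₂) + (b₃*c₁) • y + (b₃*c₂) • a := by
    have e3 : br a x = -(br x a) := hanti a x
    rw [e3, hxa]
    have e1 : br h₁ y = (c₁⁻¹*c₂) • h₁ := by
      rw [hanti, hyh h₁ hh₁, hgH h₁ hh₁, neg_neg]
    have e2 : br a y = -(br y a) := hanti a y
    simp only [map_neg, map_add, map_smul, LinearMap.neg_apply, LinearMap.add_apply,
      LinearMap.smul_apply, e1, e2, hya, hyy]
    module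
  have JD := hjac x y a
  rw [T1, T2, T3, hωxy, ωya, ωax] at JD
  have key : (-k + p • h₁ + q • h₂ - f h₂ - c₁ • k - c₂ • h₁ - (c₁⁻¹*c₂) • h₁ + b₃ • h₂)
      + (-(c₁*p)) • x + (p*b₂ - c₂*b₂ + b₃*c₁) • y
      + (p*b₃ + q*c₂ - c₁*r - 1) • a = 0 := by
    linear_combination (norm := module) JD
  have Kmem : (-k + p • h₁ + q • h₂ - f h₂ - c₁ • k - c₂ • h₁ - (c₁⁻¹*c₂) • h₁ + b₃ • h₂) ∈ H :=
    add_mem (sub_mem (sub_mem (sub_mem (sub_mem (add_mem (add_mem (neg_mem hkH)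
      (Submodule.smul_mem _ _ hh₁)) (Submodule.smul_mem _ _ hh₂)) (hf h₂ hh₂))
      (Submodule.smul_mem _ _ hkH)) (Submodule.smul_mem _ _ hh₁))
      (Submodule.smul_mem _ _ hh₁)) (Submodule.smul_mem _ _ hh₂)
  obtain ⟨hs0, ht0, hu0, hK0⟩ := stmt10_aux_indep H x y a hxH hyH haH Kmem _ _ _ key
  have hp0 : p = 0 := by
    have h' := neg_eq_zero.mp hs0
    exact (mul_eq_zero.mp h').resolve_left hc₁
  have hDu : q*c₂ - c₁*r = 1 := by rw [hp0] at hu0; linear_combination hu0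
  -- Jacobi (x, y, h₀)
  have t1 : br (br x y) h₀ = p • f h₀ + q • g h₀ + r • h₀ := by
    rw [hbxy]
    simp only [map_add, map_smul, LinearMap.add_apply, LinearMap.smul_apply,
      habH k hkH h₀ hh₀, hxh h₀ hh₀, hyh h₀ hh₀, hah h₀ hh₀]
    module
  have t2 : br (br y h₀) x = -(f (g h₀)) := by
    rw [hyh h₀ hh₀, hanti, hxh (g h₀) (hg h₀ hh₀)]
  have t3 : br (br h₀ x) y = g (f h₀) := by
    rw [hanti h₀ x, hxh h₀ hh₀, map_neg, LinearMap.neg_apply, hanti (f h₀) y,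
      hyh (f h₀) (hf h₀ hh₀), neg_neg]
  have ωyh : ω y h₀ = 0 := by rw [hskew, hωH h₀ hh₀ y, neg_zero]
  have JE := hjac x y h₀
  rw [t1, t2, t3, hωxy, hωH h₀ hh₀ x, ωyh] at JE
  have egf : g (f h₀) = -((c₁⁻¹*c₂) • f h₀) := hgH (f h₀) (hf h₀ hh₀)
  have efg : f (g h₀) = -((c₁⁻¹*c₂) • f h₀) := by rw [hgH h₀ hh₀, map_neg, map_smul]
  rw [efg, egf, hgH h₀ hh₀, hp0] at JE
  have JE' : (q * (c₁⁻¹*c₂) - r + 1) • h₀ = 0 := by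
    linear_combination (norm := module) -JE
  have hE : q * (c₁⁻¹*c₂) - r + 1 = 0 := (smul_eq_zero.mp JE').resolve_right hh₀0
  have hr : r = 1 + q * (c₁⁻¹*c₂) := by linear_combination -hE
  have hc₁m1 : c₁ = -1 := by
    have hE2 := hE
    field_simp at hE2
    linear_combination hE2 - hDu
  refine ⟨hc₁m1, ?_⟩
  have einv : c₁⁻¹ * c₂ = -c₂ := by rw [hc₁m1]; norm_num
  have hb₃ : b₃ = b₂ * (c₁⁻¹*c₂) := by
    rw [einv]
    rw [hc₁m1] at hb23
    linear_combination hb23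
  refine ⟨y + (c₁⁻¹*c₂) • a, rfl, q + (c₁⁻¹*c₂)*b₂, k + (c₁⁻¹*c₂) • h₁,
    add_mem hkH (Submodule.smul_mem _ _ hh₁), ?_, ?_, ?_, ?_, ?_, ?_, ?_⟩
  · -- spanning
    intro z
    obtain ⟨h, hh, s, t, u, hz⟩ := hspan z
    exact ⟨h, hh, s, t, u - t*(c₁⁻¹*c₂), by rw [hz]; module⟩
  · -- br y' h = 0
    intro h hh
    simp only [map_add, map_smul, LinearMap.add_apply, LinearMap.smul_apply,
      hyh h hh, hah h hh, hgH h hh]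
    module
  · -- br y' a = h₂ - y'
    simp only [map_add, map_smul, LinearMap.add_apply, LinearMap.smul_apply, hya, haa]
    rw [einv, hc₁m1]
    module
  · -- br x a = h₁ + b₂ y'
    rw [hxa, hb₃]
    module
  · -- br x y'
    simp only [map_add, map_smul, hbxy, hxa]
    rw [hp0, hr, hb₃]
    module
  · -- ω x y' = 1
    simp only [map_add, map_smul, hωxy, ωxa, smul_eq_mul]
    ring
  · -- f h₂ = d₂ h₂
    rw [hp0, hb₃, einv, hc₁m1] at hK0
    have goal' : f h₂ = (q + (c₁⁻¹*c₂)*b₂) • h₂ := by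
      rw [einv]
      linear_combination (norm := module) -hK0
    exact goal'
end

section
/- Let L be a nontrivial ω-Lie algebra over ℂ with dim L ≥ 5, of the form L = H ⊕ ℂx ⊕ ℂy ⊕ ℂa where [h,h']=0 for all h,h'∈H, [a,h]=h for all h∈H, [x,h]=λ(h)y+f(h) for all h∈H with λ: H→ℂ a nonzero linear functional and f: H→H linear, [y,h]=g(h)∈H for all h∈H with g vanishing on ker λ, ω(h,w)=0 and ω(a,w)=0 for all h∈H, w∈L, and ω(x,y)=1. Then [y,a] ∈ H ⊕ ℂy, i.e. writing [y,a]=h₁+b₁x+b₂y+b₃a one has b₁=0 and b₃=0. -/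
/-- In a nontrivial ω-Lie algebra `L = H ⊕ ℂx ⊕ ℂy ⊕ ℂa` over ℂ of
dimension ≥ 5 with `[H,H] = 0`, `[a,h] = h`, `[x,h] = λ(h)y + f(h)` (`λ ≠ 0` a
linear functional, `f : H → H` linear), `[y,h] = g(h) ∈ H` with `g(ker λ) = 0`,
`ω(H,·) = 0`, `ω(a,·) = 0` and `ω(x,y) = 1`, the bracket `[y,a]` lies in `H ⊕ ℂy`:
writing `[y,a] = h₁ + b₁x + b₂y + b₃a` one has `b₁ = 0` and `b₃ = 0`. -/
theorem stmt_13
    (L : Type*) [AddCommGroup L] [Module ℂ L] [FiniteDimensional ℂ L]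
    (br : L →ₗ[ℂ] L →ₗ[ℂ] L) (ω : L →ₗ[ℂ] L →ₗ[ℂ] ℂ)
    (hskew : ∀ u v : L, ω u v = -ω v u)
    (hanti : ∀ u v : L, br u v = -br v u)
    (hjac : ∀ u v w : L, br (br u v) w + br (br v w) u + br (br w u) v
      = ω u v • w + ω v w • u + ω w u • v)
    (hnt : ∃ u w : L, ω u w ≠ 0)
    (hdim : 5 ≤ Module.finrank ℂ L)
    (H : Submodule ℂ L) (x y a : L) (lam : L →ₗ[ℂ] ℂ) (f g : L →ₗ[ℂ] L)
    (hspan : ∀ z : L, ∃ h ∈ H, ∃ s t u : ℂ, z = h + s • x + t • y + u • a)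
    (hxH : x ∉ H)
    (hyH : y ∉ H ⊔ Submodule.span ℂ {x})
    (haH : a ∉ H ⊔ Submodule.span ℂ {x} ⊔ Submodule.span ℂ {y})
    (habH : ∀ h ∈ H, ∀ h' ∈ H, br h h' = 0)
    (hah : ∀ h ∈ H, br a h = h)
    (hlam : ∃ h ∈ H, lam h ≠ 0)
    (hf : ∀ h ∈ H, f h ∈ H) (hg : ∀ h ∈ H, g h ∈ H)
    (hgker : ∀ h ∈ H, lam h = 0 → g h = 0)
    (hxh : ∀ h ∈ H, br x h = lam h • y + f h)
    (hyh : ∀ h ∈ H, br y h = g h)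
    (hωH : ∀ h ∈ H, ∀ w : L, ω h w = 0)
    (hωa : ∀ w : L, ω a w = 0)
    (hωxy : ω x y = 1)
    (h₁ : L) (hh₁ : h₁ ∈ H) (b₁ b₂ b₃ : ℂ)
    (hya : br y a = h₁ + b₁ • x + b₂ • y + b₃ • a) :
    b₁ = 0 ∧ b₃ = 0 := by
  have hyH' : y ∉ H := fun hy => hyH (Submodule.mem_sup_left hy)
  -- Key identity from the Jacobi identity applied to (y, a, h)
  have key : ∀ h ∈ H, (b₁ * lam h) • y + (b₁ • f h + b₂ • g h + b₃ • h) = (0:L) := by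
    intro h hh
    have j := hjac y a h
    have e1 : br (br y a) h = (b₁ * lam h) • y + (b₁ • f h + b₂ • g h + b₃ • h) := by
      rw [hya]
      simp only [map_add, map_smul, LinearMap.add_apply, LinearMap.smul_apply,
        habH h₁ hh₁ h hh, hxh h hh, hyh h hh, hah h hh, smul_add, smul_smul]
      abel
    have e2 : br (br a h) y = -(g h) := by
      rw [hah h hh, hanti h y, hyh h hh]
    have e3 : br (br h y) a = g h := by
      rw [hanti h y, hyh h hh]
      have : br (-(g h)) a = -(br (g h) a) := by simp
      rw [this, hanti (g h) a, hah (g h) (hg h hh), neg_neg]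
    have o1 : ω y a = 0 := by rw [hskew y a, hωa y, neg_zero]
    have o2 : ω a h = 0 := hωa h
    have o3 : ω h y = 0 := hωH h hh y
    rw [e1, e2, e3, o1, o2, o3] at j
    simp only [zero_smul, add_zero, zero_add] at j
    calc (b₁ * lam h) • y + (b₁ • f h + b₂ • g h + b₃ • h)
        = (b₁ * lam h) • y + (b₁ • f h + b₂ • g h + b₃ • h) + -g h + g h := by abel
      _ = 0 := j
  -- b₁ = 0
  obtain ⟨h0, hh0, hl0⟩ := hlam
  have hb1 : b₁ = 0 := by
    by_contra hb
    have hmem : (b₁ • f h0 + b₂ • g h0 + b₃ • h0) ∈ H :=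
      H.add_mem (H.add_mem (H.smul_mem _ (hf h0 hh0)) (H.smul_mem _ (hg h0 hh0)))
        (H.smul_mem _ hh0)
    have hcoef : b₁ * lam h0 ≠ 0 := mul_ne_zero hb hl0
    have hv : (b₁ * lam h0) • y = -(b₁ • f h0 + b₂ • g h0 + b₃ • h0) :=
      eq_neg_of_add_eq_zero_left (key h0 hh0)
    have : y ∈ H := by
      have hy : y = (b₁ * lam h0)⁻¹ • ((b₁ * lam h0) • y) := (inv_smul_smul₀ hcoef y).symm
      rw [hy, hv]
      exact H.smul_mem _ (H.neg_mem hmem)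
    exact hyH' this
  -- dimension argument: there is a nonzero h' ∈ H with lam h' = 0
  have hHtop : (⊤ : Submodule ℂ L) ≤
      H ⊔ Submodule.span ℂ {x} ⊔ Submodule.span ℂ {y} ⊔ Submodule.span ℂ {a} := by
    intro z _
    obtain ⟨h, hh, s, t, u, rfl⟩ := hspan z
    refine Submodule.add_mem _ (Submodule.add_mem _ (Submodule.add_mem _ ?_ ?_) ?_) ?_
    · exact Submodule.mem_sup_left (Submodule.mem_sup_left (Submodule.mem_sup_left hh))
    · exact Submodule.mem_sup_left (Submodule.mem_sup_left (Submodule.mem_sup_right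
        (Submodule.smul_mem _ _ (Submodule.mem_span_singleton_self x))))
    · exact Submodule.mem_sup_left (Submodule.mem_sup_right
        (Submodule.smul_mem _ _ (Submodule.mem_span_singleton_self y)))
    · exact Submodule.mem_sup_right
        (Submodule.smul_mem _ _ (Submodule.mem_span_singleton_self a))
  have hspanle : ∀ v : L, Module.finrank ℂ (Submodule.span ℂ ({v} : Set L)) ≤ 1 := by
    intro v
    classical
    rcases eq_or_ne v 0 with rfl | hv
    · rw [Submodule.span_zero_singleton]; simp
    · rw [finrank_span_singleton hv]
  have hHrank : 2 ≤ Module.finrank ℂ H := by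
    have h1 : Module.finrank ℂ L ≤ Module.finrank ℂ
        (H ⊔ Submodule.span ℂ {x} ⊔ Submodule.span ℂ {y} ⊔ Submodule.span ℂ {a} :
          Submodule ℂ L) := by
      have := Submodule.finrank_mono hHtop
      simpa [finrank_top] using this
    have h2 := Submodule.finrank_add_le_finrank_add_finrank
      (H ⊔ Submodule.span ℂ {x} ⊔ Submodule.span ℂ {y}) (Submodule.span ℂ {a})
    have h3 := Submodule.finrank_add_le_finrank_add_finrank
      (H ⊔ Submodule.span ℂ {x}) (Submodule.span ℂ {y})
    have h4 := Submodule.finrank_add_le_finrank_add_finrank H (Submodule.span ℂ {x})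
    have hx1 := hspanle x
    have hy1 := hspanle y
    have ha1 := hspanle a
    omega
  obtain ⟨h', hh', hne', hl'⟩ : ∃ h' : L, h' ∈ H ∧ h' ≠ 0 ∧ lam h' = 0 := by
    set lam' : H →ₗ[ℂ] ℂ := lam.comp H.subtype with hlam'
    have hrk : Module.finrank ℂ (LinearMap.range lam') ≤ 1 := by
      have := Submodule.finrank_le (LinearMap.range lam')
      simpa [Module.finrank_self] using this
    have hker : 1 ≤ Module.finrank ℂ (LinearMap.ker lam') := by
      have := LinearMap.finrank_range_add_finrank_ker lam'
      omega
    have hkerne : LinearMap.ker lam' ≠ ⊥ := by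
      intro hbot
      rw [hbot, finrank_bot] at hker
      omega
    obtain ⟨b, hb, hb0⟩ := Submodule.exists_mem_ne_zero_of_ne_bot hkerne
    refine ⟨(b : L), b.2, ?_, ?_⟩
    · simpa using hb0
    · simpa [hlam', LinearMap.mem_ker] using hb
  have hkey := key h' hh'
  rw [hb1, hgker h' hh' hl'] at hkey
  simp only [zero_mul, zero_smul, smul_zero, zero_add, add_zero] at hkey
  have hb3 : b₃ = 0 := by
    rcases smul_eq_zero.mp hkey with h | h
    · exact h
    · exact absurd h hne'
  exact ⟨hb1, hb3⟩
end

section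
/- There is no nontrivial ω-Lie algebra L over ℂ with dim L ≥ 5 of the form L = H ⊕ ℂx ⊕ ℂy ⊕ ℂa satisfying: [h,h']=0 for all h,h'∈H, [a,h]=h for all h∈H, [x,h]=λ(h)y+f(h) for all h∈H with λ: H→ℂ a nonzero linear functional and f: H→H linear, [y,h]=g(h)∈H for all h∈H with g vanishing on ker λ, ω(h,w)=0 and ω(a,w)=0 for all h∈H, w∈L, ω(x,y)=1, and [y,a]=h₁+b₂y with h₁∈H and b₂ ∈ ℂ, b₂ ≠ 0, b₂ ≠ −1. -/
/-- There is no nontrivial ω-Lie algebra `L = H ⊕ ℂx ⊕ ℂy ⊕ ℂa`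
over ℂ of dimension ≥ 5 with `[H,H] = 0`, `[a,h] = h`, `[x,h] = λ(h)y + f(h)`
(`λ ≠ 0` a linear functional, `f : H → H` linear), `[y,h] = g(h) ∈ H` with
`g(ker λ) = 0`, `ω(H,·) = 0`, `ω(a,·) = 0`, `ω(x,y) = 1`, and
`[y,a] = h₁ + b₂y` with `b₂ ≠ 0` and `b₂ ≠ −1`. -/
theorem stmt_14
    (L : Type*) [AddCommGroup L] [Module ℂ L] [FiniteDimensional ℂ L]
    (br : L →ₗ[ℂ] L →ₗ[ℂ] L) (ω : L →ₗ[ℂ] L →ₗ[ℂ] ℂ)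
    (hskew : ∀ u v : L, ω u v = -ω v u)
    (hanti : ∀ u v : L, br u v = -br v u)
    (hjac : ∀ u v w : L, br (br u v) w + br (br v w) u + br (br w u) v
      = ω u v • w + ω v w • u + ω w u • v)
    (hnt : ∃ u w : L, ω u w ≠ 0)
    (hdim : 5 ≤ Module.finrank ℂ L)
    (H : Submodule ℂ L) (x y a : L) (lam : L →ₗ[ℂ] ℂ) (f g : L →ₗ[ℂ] L)
    (hspan : ∀ z : L, ∃ h ∈ H, ∃ s t u : ℂ, z = h + s • x + t • y + u • a)
    (hxH : x ∉ H)
    (hyH : y ∉ H ⊔ Submodule.span ℂ {x})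
    (haH : a ∉ H ⊔ Submodule.span ℂ {x} ⊔ Submodule.span ℂ {y})
    (habH : ∀ h ∈ H, ∀ h' ∈ H, br h h' = 0)
    (hah : ∀ h ∈ H, br a h = h)
    (hlam : ∃ h ∈ H, lam h ≠ 0)
    (hf : ∀ h ∈ H, f h ∈ H) (hg : ∀ h ∈ H, g h ∈ H)
    (hgker : ∀ h ∈ H, lam h = 0 → g h = 0)
    (hxh : ∀ h ∈ H, br x h = lam h • y + f h)
    (hyh : ∀ h ∈ H, br y h = g h)
    (hωH : ∀ h ∈ H, ∀ w : L, ω h w = 0)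
    (hωa : ∀ w : L, ω a w = 0)
    (hωxy : ω x y = 1)
    (h₁ : L) (hh₁ : h₁ ∈ H) (b₂ : ℂ) (hb₂ : b₂ ≠ 0) (hb₂' : b₂ ≠ -1)
    (hya : br y a = h₁ + b₂ • y) :
    False := by
  -- basic facts
  have br0 : ∀ z : L, br z z = 0 := by
    intro z
    have h := hanti z z
    have h2 : (2:ℂ) • br z z = 0 := by rw [two_smul]; nth_rewrite 1 [h]; abel
    simpa using h2
  have hha : ∀ h ∈ H, br h a = -h := by
    intro h hh; rw [hanti, hah h hh]
  obtain ⟨h₀, hh₀, hl₀⟩ := hlam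
  have hh₀ne : h₀ ≠ 0 := fun e => hl₀ (by simp [e])
  -- extraction lemmas
  have key_y : ∀ (c : ℂ) (v : L), v ∈ H → v + c • y = 0 → c = 0 := by
    intro c v hv hvc
    by_contra hc
    apply hyH
    have h1 : c • y = -v := eq_neg_of_add_eq_zero_right hvc
    have h2 : y = c⁻¹ • (-v) := by rw [← h1, smul_smul, inv_mul_cancel₀ hc, one_smul]
    rw [h2]
    exact Submodule.mem_sup_left (Submodule.smul_mem _ _ (Submodule.neg_mem _ hv))
  have key_a : ∀ (c β : ℂ) (v : L), v ∈ H → v + β • y + c • a = 0 → c = 0 := by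
    intro c β v hv hvc
    by_contra hc
    apply haH
    have h1 : c • a = -(v + β • y) := eq_neg_of_add_eq_zero_right hvc
    have h2 : a = c⁻¹ • (-(v + β • y)) := by
      rw [← h1, smul_smul, inv_mul_cancel₀ hc, one_smul]
    rw [h2]
    refine Submodule.smul_mem _ _ (Submodule.neg_mem _ (Submodule.add_mem _ ?_ ?_))
    · exact Submodule.mem_sup_left (Submodule.mem_sup_left hv)
    · exact Submodule.mem_sup_right
        (Submodule.smul_mem _ _ (Submodule.mem_span_singleton_self y))
  -- Step 1 : g vanishes on H
  have hg0 : ∀ h ∈ H, g h = 0 := by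
    intro h hh
    have J := hjac y a h
    have e1 : br (br y a) h = b₂ • g h := by
      rw [hya]
      simp only [map_add, LinearMap.add_apply, map_smul, LinearMap.smul_apply,
        habH h₁ hh₁ h hh, hyh h hh, zero_add]
    have e2 : br (br a h) y = -g h := by
      rw [hah h hh, hanti h y, hyh h hh]
    have e3 : br (br h y) a = g h := by
      have e : br h y = -g h := by rw [hanti h y, hyh h hh]
      rw [e, map_neg, LinearMap.neg_apply, hanti (g h) a, hah _ (hg h hh), neg_neg]
    have eω1 : ω y a = 0 := by rw [hskew, hωa, neg_zero]
    rw [e1, e2, e3, eω1, hωa h, hωH h hh y] at J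
    have hb : b₂ • g h = 0 := by linear_combination (norm := module) J
    rcases smul_eq_zero.mp hb with h' | h'
    · exact absurd h' hb₂
    · exact h'
  -- Step 2 : the x-coefficient of [x,a]
  obtain ⟨h', hh', s, t, u, hxa⟩ := hspan (br x a)
  have hs : s = 1 + b₂ := by
    have J := hjac x a h₀
    have e1 : br (br x a) h₀ = s • (lam h₀ • y + f h₀) + u • h₀ := by
      rw [hxa]
      simp only [map_add, LinearMap.add_apply, map_smul, LinearMap.smul_apply,
        habH h' hh' h₀ hh₀, hxh h₀ hh₀, hyh h₀ hh₀, hg0 h₀ hh₀, hah h₀ hh₀,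
        smul_zero, zero_add, add_zero]
    have e2 : br (br a h₀) x = -(lam h₀ • y + f h₀) := by
      rw [hah h₀ hh₀, hanti h₀ x, hxh h₀ hh₀]
    have e3 : br (br h₀ x) a = -(lam h₀ • (h₁ + b₂ • y)) + f h₀ := by
      rw [hanti h₀ x, hxh h₀ hh₀, map_neg, LinearMap.neg_apply]
      simp only [map_add, LinearMap.add_apply, map_smul, LinearMap.smul_apply,
        hya, hha _ (hf h₀ hh₀)]
      abel
    have eωxa : ω x a = 0 := by rw [hskew, hωa, neg_zero]
    rw [e1, e2, e3, eωxa, hωa h₀, hωH h₀ hh₀ x] at J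
    have heq : (s • f h₀ + u • h₀ - lam h₀ • h₁) + (lam h₀ * (s - 1 - b₂)) • y = 0 := by
      linear_combination (norm := module) J
    have hv : s • f h₀ + u • h₀ - lam h₀ • h₁ ∈ H :=
      Submodule.sub_mem _ (Submodule.add_mem _ (Submodule.smul_mem _ _ (hf h₀ hh₀))
        (Submodule.smul_mem _ _ hh₀)) (Submodule.smul_mem _ _ hh₁)
    have hc := key_y _ _ hv heq
    rcases mul_eq_zero.mp hc with h'' | h''
    · exact absurd h'' hl₀
    · linear_combination h''
  -- Step 3 : [x,y] has x-coefficient 0 and a-coefficient 1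
  obtain ⟨h'', hh'', p, q, r, hxy⟩ := hspan (br x y)
  have J3 := hjac x y h₀
  have e1 : br (br x y) h₀ = p • (lam h₀ • y + f h₀) + r • h₀ := by
    rw [hxy]
    simp only [map_add, LinearMap.add_apply, map_smul, LinearMap.smul_apply,
      habH h'' hh'' h₀ hh₀, hxh h₀ hh₀, hyh h₀ hh₀, hg0 h₀ hh₀, hah h₀ hh₀,
      smul_zero, zero_add, add_zero]
  have e2 : br (br y h₀) x = 0 := by
    simp only [hyh h₀ hh₀, hg0 h₀ hh₀, map_zero, LinearMap.zero_apply]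
  have e3 : br (br h₀ x) y = 0 := by
    rw [hanti h₀ x, hxh h₀ hh₀, map_neg, LinearMap.neg_apply]
    simp only [map_add, LinearMap.add_apply, map_smul, LinearMap.smul_apply, br0 y,
      hanti (f h₀) y, hyh _ (hf h₀ hh₀), hg0 _ (hf h₀ hh₀), smul_zero, neg_zero,
      add_zero, neg_neg, zero_add]
  have eωyh : ω y h₀ = 0 := by rw [hskew, hωH h₀ hh₀, neg_zero]
  rw [e1, e2, e3, hωxy, eωyh, hωH h₀ hh₀ x] at J3
  have heq3 : (p • f h₀ + (r - 1) • h₀) + (p * lam h₀) • y = 0 := by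
    linear_combination (norm := module) J3
  have hv3 : p • f h₀ + (r - 1) • h₀ ∈ H :=
    Submodule.add_mem _ (Submodule.smul_mem _ _ (hf h₀ hh₀)) (Submodule.smul_mem _ _ hh₀)
  have hc3 := key_y _ _ hv3 heq3
  have hp : p = 0 := by
    rcases mul_eq_zero.mp hc3 with h3 | h3
    · exact h3
    · exact absurd h3 hl₀
  have hr : r = 1 := by
    rw [hp] at heq3
    have : (r - 1) • h₀ = 0 := by
      have := heq3
      simpa using this
    rcases smul_eq_zero.mp this with h3 | h3
    · linear_combination h3
    · exact absurd h3 hh₀ne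
  rw [hp, hr, zero_smul, add_zero, one_smul] at hxy
  -- Step 4 : Jacobi on (x, y, a)
  have J4 := hjac x y a
  have f1 : br (br x y) a = -h'' + q • (h₁ + b₂ • y) := by
    rw [hxy]
    simp only [map_add, LinearMap.add_apply, hha h'' hh'', map_smul,
      LinearMap.smul_apply, hya, br0 a, add_zero]
  have f2 : br (br y a) x = -(lam h₁ • y + f h₁) + b₂ • -(h'' + q • y + a) := by
    rw [hya]
    simp only [map_add, LinearMap.add_apply, map_smul, LinearMap.smul_apply,
      hanti h₁ x, hxh h₁ hh₁, hanti y x, hxy]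
  have f3 : br (br a x) y =
      -(s • (h'' + q • y + a) + u • -(h₁ + b₂ • y)) := by
    rw [hanti a x, hxa, map_neg, LinearMap.neg_apply]
    simp only [map_add, LinearMap.add_apply, map_smul, LinearMap.smul_apply,
      hanti h' y, hyh h' hh', hg0 h' hh', br0 y, hanti a y, hya, hxy,
      smul_zero, neg_zero, zero_add, add_zero]
  have eωya : ω y a = 0 := by rw [hskew, hωa, neg_zero]
  rw [f1, f2, f3, hωxy, eωya, hωa x] at J4
  have heq4 : ((-h'' + q • h₁ - f h₁ - b₂ • h'' - s • h'' + u • h₁)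
      + (q * b₂ - lam h₁ - b₂ * q - s * q + u * b₂) • y)
      + (-b₂ - s - 1) • a = 0 := by
    linear_combination (norm := module) J4
  have hv4 : -h'' + q • h₁ - f h₁ - b₂ • h'' - s • h'' + u • h₁ ∈ H := by
    refine Submodule.add_mem _ (Submodule.sub_mem _ (Submodule.sub_mem _
      (Submodule.sub_mem _ (Submodule.add_mem _ (Submodule.neg_mem _ hh'')
        (Submodule.smul_mem _ _ hh₁)) (hf h₁ hh₁))
      (Submodule.smul_mem _ _ hh'')) (Submodule.smul_mem _ _ hh''))
      (Submodule.smul_mem _ _ hh₁)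
  have hc4 := key_a _ _ _ hv4 heq4
  exact hb₂' (by linear_combination (-hc4 - hs) / 2)
end

section
/- There is no nontrivial ω-Lie algebra L over ℂ with dim L ≥ 5 of the form L = H ⊕ ℂx ⊕ ℂy ⊕ ℂa satisfying: [h,h']=0 for all h,h'∈H, [a,h]=h for all h∈H, [x,h]=λ(h)y+f(h) for all h∈H with λ: H→ℂ a nonzero linear functional and f: H→H linear, [y,h]=g(h)∈H for all h∈H with g vanishing on ker λ, ω(h,w)=0 and ω(a,w)=0 for all h∈H, w∈L, ω(x,y)=1, and [y,a]=h₁ for some h₁∈H (i.e. the y-, x- and a-components of [y,a] vanish). -/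
/-- There is no nontrivial ω-Lie algebra `L = H ⊕ ℂx ⊕ ℂy ⊕ ℂa`
over ℂ of dimension ≥ 5 with `[H,H] = 0`, `[a,h] = h`, `[x,h] = λ(h)y + f(h)`
(`λ ≠ 0` a linear functional, `f : H → H` linear), `[y,h] = g(h) ∈ H` with
`g(ker λ) = 0`, `ω(H,·) = 0`, `ω(a,·) = 0`, `ω(x,y) = 1`, and `[y,a] = h₁ ∈ H`
(the `x`-, `y`- and `a`-components of `[y,a]` all vanish). -/
theorem stmt_15
    (L : Type*) [AddCommGroup L] [Module ℂ L] [FiniteDimensional ℂ L]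
    (br : L →ₗ[ℂ] L →ₗ[ℂ] L) (ω : L →ₗ[ℂ] L →ₗ[ℂ] ℂ)
    (hskew : ∀ u v : L, ω u v = -ω v u)
    (hanti : ∀ u v : L, br u v = -br v u)
    (hjac : ∀ u v w : L, br (br u v) w + br (br v w) u + br (br w u) v
      = ω u v • w + ω v w • u + ω w u • v)
    (hnt : ∃ u w : L, ω u w ≠ 0)
    (hdim : 5 ≤ Module.finrank ℂ L)
    (H : Submodule ℂ L) (x y a : L) (lam : L →ₗ[ℂ] ℂ) (f g : L →ₗ[ℂ] L)
    (hspan : ∀ z : L, ∃ h ∈ H, ∃ s t u : ℂ, z = h + s • x + t • y + u • a)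
    (hxH : x ∉ H)
    (hyH : y ∉ H ⊔ Submodule.span ℂ {x})
    (haH : a ∉ H ⊔ Submodule.span ℂ {x} ⊔ Submodule.span ℂ {y})
    (habH : ∀ h ∈ H, ∀ h' ∈ H, br h h' = 0)
    (hah : ∀ h ∈ H, br a h = h)
    (hlam : ∃ h ∈ H, lam h ≠ 0)
    (hf : ∀ h ∈ H, f h ∈ H) (hg : ∀ h ∈ H, g h ∈ H)
    (hgker : ∀ h ∈ H, lam h = 0 → g h = 0)
    (hxh : ∀ h ∈ H, br x h = lam h • y + f h)
    (hyh : ∀ h ∈ H, br y h = g h)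
    (hωH : ∀ h ∈ H, ∀ w : L, ω h w = 0)
    (hωa : ∀ w : L, ω a w = 0)
    (hωxy : ω x y = 1)
    (h₁ : L) (hh₁ : h₁ ∈ H)
    (hya : br y a = h₁) :
    False := by
  classical
  -- independence of H, x, y, a
  have indep : ∀ h ∈ H, ∀ s t u : ℂ, h + s • x + t • y + u • a = 0 →
      h = 0 ∧ s = 0 ∧ t = 0 ∧ u = 0 := by
    intro h hH s t u heq
    have hxmem : x ∈ H ⊔ Submodule.span ℂ {x} :=
      Submodule.mem_sup_right (Submodule.mem_span_singleton_self x)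
    have hu : u = 0 := by
      by_contra hu
      apply haH
      have h1 : u • a = -(h + s • x + t • y) := by
        linear_combination (norm := module) heq
      have h2 : a = u⁻¹ • -(h + s • x + t • y) := by
        rw [← h1, inv_smul_smul₀ hu]
      rw [h2]
      refine Submodule.smul_mem _ _ (Submodule.neg_mem _ ?_)
      refine add_mem (add_mem ?_ ?_) ?_
      · exact Submodule.mem_sup_left (Submodule.mem_sup_left hH)
      · exact Submodule.smul_mem _ _ (Submodule.mem_sup_left hxmem)
      · exact Submodule.smul_mem _ _
          (Submodule.mem_sup_right (Submodule.mem_span_singleton_self y))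
    subst hu
    have ht : t = 0 := by
      by_contra ht
      apply hyH
      have h1 : t • y = -(h + s • x) := by
        linear_combination (norm := module) heq
      have h2 : y = t⁻¹ • -(h + s • x) := by
        rw [← h1, inv_smul_smul₀ ht]
      rw [h2]
      refine Submodule.smul_mem _ _ (Submodule.neg_mem _ ?_)
      exact add_mem (Submodule.mem_sup_left hH) (Submodule.smul_mem _ _ hxmem)
    subst ht
    have hs : s = 0 := by
      by_contra hs
      apply hxH
      have h1 : s • x = -h := by
        linear_combination (norm := module) heq
      have h2 : x = s⁻¹ • -h := by rw [← h1, inv_smul_smul₀ hs]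
      rw [h2]
      exact Submodule.smul_mem _ _ (Submodule.neg_mem _ hH)
    subst hs
    have hh : h = 0 := by linear_combination (norm := module) heq
    exact ⟨hh, rfl, rfl, rfl⟩
  -- a nonzero element of ker lam ∩ H
  have hHrank : 2 ≤ Module.finrank ℂ H := by
    have htop : (⊤ : Submodule ℂ L) ≤ H ⊔ Submodule.span ℂ ({x, y, a} : Set L) := by
      intro z _
      obtain ⟨h, hH, s, t, u, hz⟩ := hspan z
      rw [hz]
      refine add_mem (add_mem (add_mem (Submodule.mem_sup_left hH) ?_) ?_) ?_ <;>
        exact Submodule.smul_mem _ _ (Submodule.mem_sup_right (Submodule.subset_span (by simp)))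
    have h1 : Module.finrank ℂ L ≤ Module.finrank ℂ H +
        Module.finrank ℂ (Submodule.span ℂ ({x, y, a} : Set L)) := by
      calc Module.finrank ℂ L = Module.finrank ℂ (⊤ : Submodule ℂ L) :=
            (finrank_top ℂ L).symm
        _ ≤ Module.finrank ℂ ↥(H ⊔ Submodule.span ℂ ({x, y, a} : Set L)) :=
            Submodule.finrank_mono htop
        _ ≤ _ := Submodule.finrank_add_le_finrank_add_finrank _ _
    have h2 : Module.finrank ℂ (Submodule.span ℂ ({x, y, a} : Set L)) ≤ 3 := by
      refine (finrank_span_le_card (R := ℂ) ({x, y, a} : Set L)).trans ?_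
      rw [Set.toFinset_insert, Set.toFinset_insert, Set.toFinset_singleton]
      refine (Finset.card_insert_le _ _).trans (Nat.succ_le_succ ?_)
      exact (Finset.card_insert_le _ _).trans (by simp)
    omega
  obtain ⟨hz, hzH, hzlam, hzne⟩ :
      ∃ hz : L, hz ∈ H ∧ lam hz = 0 ∧ hz ≠ 0 := by
    set lamH : H →ₗ[ℂ] ℂ := lam.comp H.subtype with hlamH
    have hker : 0 < Module.finrank ℂ (LinearMap.ker lamH) := by
      have := LinearMap.finrank_range_add_finrank_ker lamH
      have hr : Module.finrank ℂ (LinearMap.range lamH) ≤ 1 := by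
        simpa using Submodule.finrank_le (LinearMap.range lamH)
      omega
    haveI := (Module.finrank_pos_iff (R := ℂ)).mp hker
    obtain ⟨⟨v, hv⟩, hvne⟩ := exists_ne (0 : ↥(LinearMap.ker lamH))
    refine ⟨(v : L), v.2, hv, fun h0 => hvne (Subtype.ext (Subtype.ext h0))⟩
  -- an element h₀ ∈ H with lam h₀ = 1
  obtain ⟨h', hh'H, hl'⟩ := hlam
  set h₀ : L := (lam h')⁻¹ • h' with hh₀def
  have hh₀H : h₀ ∈ H := Submodule.smul_mem _ _ hh'H
  have hlamh₀ : lam h₀ = 1 := by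
    simp [hh₀def, inv_mul_cancel₀ hl']
  -- decompositions of br x y and br a x
  obtain ⟨p, hpH, s, t, u, hxy⟩ := hspan (br x y)
  obtain ⟨q, hqH, s₂, t₂, u₂, hax⟩ := hspan (br a x)
  -- useful bracket values
  have hgz : g hz = 0 := hgker hz hzH hzlam
  have hbr_ha : ∀ h ∈ H, br h a = -h := by
    intro h hH; rw [hanti, hah h hH]
  have hbr_hx : ∀ h ∈ H, br h x = -(lam h • y + f h) := by
    intro h hH; rw [hanti, hxh h hH]
  have hbr_hy : ∀ h ∈ H, br h y = -g h := by
    intro h hH; rw [hanti, hyh h hH]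
  have hbr_xa : br x a = -(q + s₂ • x + t₂ • y + u₂ • a) := by
    rw [hanti, hax]
  have hωyh : ∀ h ∈ H, ω y h = 0 := by
    intro h hH; rw [hskew, hωH h hH, neg_zero]
  have hωxh : ∀ h ∈ H, ω x h = 0 := by
    intro h hH; rw [hskew, hωH h hH, neg_zero]
  have hωya : ω y a = 0 := by rw [hskew, hωa, neg_zero]
  have hbr_ay : br a y = -h₁ := by rw [hanti, hya]
  have sq : ∀ v : L, br v v = 0 := by
    intro v
    have h := hanti v v
    have h2 : (2:ℂ) • br v v = 0 := by linear_combination (norm := module) h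
    simpa using h2
  have hωyx : ω y x = -1 := by rw [hskew, hωxy]
  -- Jacobi (a, x, h₀):  s₂ = -1
  have hs₂ : s₂ = -1 := by
    have J := hjac a x h₀
    rw [hax, hxh h₀ hh₀H, hbr_ha h₀ hh₀H] at J
    simp only [map_add, map_smul, map_neg, LinearMap.add_apply, LinearMap.smul_apply,
      LinearMap.neg_apply] at J
    rw [habH q hqH h₀ hh₀H, hxh h₀ hh₀H, hyh h₀ hh₀H, hah h₀ hh₀H,
      hya, hbr_ha (f h₀) (hf h₀ hh₀H), hbr_hx h₀ hh₀H, hωa, hωxh h₀ hh₀H,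
      hωH h₀ hh₀H, hlamh₀] at J
    have key : (s₂ • f h₀ + t₂ • g h₀ + u₂ • h₀ + h₁) + (0:ℂ) • x + (s₂ + 1) • y +
        (0:ℂ) • a = 0 := by
      linear_combination (norm := module) J
    have hmem : s₂ • f h₀ + t₂ • g h₀ + u₂ • h₀ + h₁ ∈ H := by
      exact add_mem (add_mem (add_mem (Submodule.smul_mem _ _ (hf h₀ hh₀H))
        (Submodule.smul_mem _ _ (hg h₀ hh₀H))) (Submodule.smul_mem _ _ hh₀H)) hh₁
    linear_combination (indep _ hmem _ _ _ key).2.2.1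
  -- Jacobi (a, x, hz):  f hz = u₂ • hz
  have hfz : f hz = u₂ • hz := by
    have J := hjac a x hz
    rw [hax, hxh hz hzH, hbr_ha hz hzH] at J
    simp only [map_add, map_smul, map_neg, LinearMap.add_apply, LinearMap.smul_apply,
      LinearMap.neg_apply] at J
    rw [habH q hqH hz hzH, hxh hz hzH, hyh hz hzH, hah hz hzH,
      hya, hbr_ha (f hz) (hf hz hzH), hbr_hx hz hzH, hωa, hωxh hz hzH,
      hωH hz hzH, hzlam, hgz, hs₂] at J
    linear_combination (norm := module) -J
  -- Jacobi (x, y, a):  s * u₂ + u = -1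
  have hu : s * u₂ + u = -1 := by
    have J := hjac x y a
    rw [hxy, hya, hax] at J
    simp only [map_add, map_smul, map_neg, LinearMap.add_apply, LinearMap.smul_apply,
      LinearMap.neg_apply] at J
    rw [hbr_ha p hpH, hbr_xa, hya, sq a, sq y, hbr_hx h₁ hh₁, hbr_hy q hqH,
      hxy, hbr_ay, hωxy, hωya, hωa, hs₂] at J
    have key : (-p - s • q + t • h₁ - f h₁ - g q + (-1 : ℂ) • p - u₂ • h₁) +
        (0:ℂ) • x + (-(s * t₂) - lam h₁ + (-1) * t) • y +
        (-(s * u₂) + (-1) * u - 1) • a = 0 := by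
      linear_combination (norm := module) J
    have hmem : -p - s • q + t • h₁ - f h₁ - g q + (-1 : ℂ) • p - u₂ • h₁ ∈ H := by
      refine sub_mem (add_mem (sub_mem (sub_mem (add_mem (sub_mem (Submodule.neg_mem _ hpH)
        (Submodule.smul_mem _ _ hqH)) (Submodule.smul_mem _ _ hh₁)) (hf h₁ hh₁))
        (hg q hqH)) (Submodule.smul_mem _ _ hpH)) (Submodule.smul_mem _ _ hh₁)
    linear_combination -(indep _ hmem _ _ _ key).2.2.2
  -- Jacobi (x, y, hz):  contradiction
  have J := hjac x y hz
  simp only [hxy, map_add, map_smul, map_neg, map_zero, LinearMap.add_apply,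
    LinearMap.smul_apply, LinearMap.neg_apply, LinearMap.zero_apply,
    habH p hpH hz hzH, hxh hz hzH, hyh hz hzH, hah hz hzH, hbr_hx hz hzH, hbr_hy hz hzH,
    hzlam, hgz, hfz, hωxy, hωyh hz hzH, hωH hz hzH,
    zero_smul, smul_zero, add_zero, zero_add, neg_zero, neg_neg, one_smul] at J
  -- J now should give (s*u₂ + u) • hz = hz
  have key : ((2:ℂ)) • hz = 0 := by
    have h2 : (s * u₂ + u) • hz = hz := by
      linear_combination (norm := module) J
    rw [hu] at h2
    linear_combination (norm := module) -h2
  exact hzne (by simpa using key)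
end

section
/- Let L be a nontrivial ω-Lie algebra over ℂ with dim L ≥ 5, of the form L = H ⊕ ℂx ⊕ ℂy ⊕ ℂa where [h,h']=0 for all h,h'∈H, [a,h]=h for all h∈H, [x,h]=λ(h)y+f(h) for all h∈H with λ: H→ℂ a nonzero linear functional and f: H→H linear, [y,h]=g(h)∈H for all h∈H with g vanishing on ker λ, ω(h,w)=0 and ω(a,w)=0 for all h∈H, w∈L, ω(x,y)=1, and [y,a]=h₁−y for some h₁∈H. Then h₁=0, g=0 (so [y,h]=0 for all h∈H), and there exist c₂, d₁ ∈ ℂ and h₃, h₄ ∈ H such that [x,a]=c₂y+h₄ and [x,y]=d₁y+a+h₃; in particular [L,L] ≠ L. -/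
/-- Derivation of the NP₄-type algebras. In a nontrivial ω-Lie
algebra `L = H ⊕ ℂx ⊕ ℂy ⊕ ℂa` over ℂ of dimension ≥ 5 with `[H,H] = 0`,
`[a,h] = h`, `[x,h] = λ(h)y + f(h)` (`λ ≠ 0` a linear functional, `f : H → H`
linear), `[y,h] = g(h) ∈ H` with `g(ker λ) = 0`, `ω(H,·) = 0`, `ω(a,·) = 0`,
`ω(x,y) = 1`, and `[y,a] = h₁ − y`, one has `h₁ = 0`, `g = 0` (so `[y,h] = 0` for
all `h ∈ H`), and there are `c₂, d₁ ∈ ℂ`, `h₃, h₄ ∈ H` with `[x,a] = c₂y + h₄` and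
`[x,y] = d₁y + a + h₃`; in particular `[L,L] ≠ L`. -/
theorem stmt_16
    (L : Type*) [AddCommGroup L] [Module ℂ L] [FiniteDimensional ℂ L]
    (br : L →ₗ[ℂ] L →ₗ[ℂ] L) (ω : L →ₗ[ℂ] L →ₗ[ℂ] ℂ)
    (hskew : ∀ u v : L, ω u v = -ω v u)
    (hanti : ∀ u v : L, br u v = -br v u)
    (hjac : ∀ u v w : L, br (br u v) w + br (br v w) u + br (br w u) v
      = ω u v • w + ω v w • u + ω w u • v)
    (hnt : ∃ u w : L, ω u w ≠ 0)
    (hdim : 5 ≤ Module.finrank ℂ L)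
    (H : Submodule ℂ L) (x y a : L) (lam : L →ₗ[ℂ] ℂ) (f g : L →ₗ[ℂ] L)
    (hspan : ∀ z : L, ∃ h ∈ H, ∃ s t u : ℂ, z = h + s • x + t • y + u • a)
    (hxH : x ∉ H)
    (hyH : y ∉ H ⊔ Submodule.span ℂ {x})
    (haH : a ∉ H ⊔ Submodule.span ℂ {x} ⊔ Submodule.span ℂ {y})
    (habH : ∀ h ∈ H, ∀ h' ∈ H, br h h' = 0)
    (hah : ∀ h ∈ H, br a h = h)
    (hlam : ∃ h ∈ H, lam h ≠ 0)
    (hf : ∀ h ∈ H, f h ∈ H) (hg : ∀ h ∈ H, g h ∈ H)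
    (hgker : ∀ h ∈ H, lam h = 0 → g h = 0)
    (hxh : ∀ h ∈ H, br x h = lam h • y + f h)
    (hyh : ∀ h ∈ H, br y h = g h)
    (hωH : ∀ h ∈ H, ∀ w : L, ω h w = 0)
    (hωa : ∀ w : L, ω a w = 0)
    (hωxy : ω x y = 1)
    (h₁ : L) (hh₁ : h₁ ∈ H)
    (hya : br y a = h₁ - y) :
    h₁ = 0 ∧ (∀ h ∈ H, g h = 0) ∧ (∀ h ∈ H, br y h = 0) ∧
    (∃ c₂ d₁ : ℂ, ∃ h₃ ∈ H, ∃ h₄ ∈ H,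
      br x a = c₂ • y + h₄ ∧ br x y = d₁ • y + a + h₃) ∧
    Submodule.span ℂ {z : L | ∃ u w : L, z = br u w} ≠ ⊤ := by
  classical
  -- br u u = 0
  have hbrz : ∀ u : L, br u u = 0 := by
    intro u
    have h := hanti u u
    have h2 : (2:ℂ) • br u u = 0 := by
      rw [two_smul]; nth_rewrite 2 [h]; abel
    simpa using (smul_eq_zero.mp h2).resolve_left (by norm_num)
  -- linear independence of x, y, a over H
  have indepL : ∀ h ∈ H, ∀ s t u : ℂ,
      h + s • x + t • y + u • a = 0 → s = 0 ∧ t = 0 ∧ u = 0 ∧ h = 0 := by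
    intro h hh s t u heq
    have hu : u = 0 := by
      by_contra hu
      apply haH
      have h' : u • a = -(h + s • x + t • y) := by
        rw [eq_neg_iff_add_eq_zero, add_comm]; exact heq
    -- a = u⁻¹ • (u • a)
      have ha' : a = u⁻¹ • (-(h + s • x + t • y)) := by
        rw [← h', smul_smul, inv_mul_cancel₀ hu, one_smul]
      rw [ha']
      refine Submodule.smul_mem _ _ (Submodule.neg_mem _ ?_)
      refine Submodule.add_mem _ (Submodule.add_mem _ ?_ ?_) ?_
      · exact Submodule.mem_sup_left (Submodule.mem_sup_left hh)
      · exact Submodule.smul_mem _ _ (Submodule.mem_sup_left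
          (Submodule.mem_sup_right (Submodule.mem_span_singleton_self x)))
      · exact Submodule.smul_mem _ _ (Submodule.mem_sup_right
          (Submodule.mem_span_singleton_self y))
    subst hu
    rw [zero_smul, add_zero] at heq
    have ht : t = 0 := by
      by_contra ht
      apply hyH
      have h' : t • y = -(h + s • x) := by
        rw [eq_neg_iff_add_eq_zero, add_comm]; exact heq
      have hy' : y = t⁻¹ • (-(h + s • x)) := by
        rw [← h', smul_smul, inv_mul_cancel₀ ht, one_smul]
      rw [hy']
      refine Submodule.smul_mem _ _ (Submodule.neg_mem _ ?_)
      refine Submodule.add_mem _ (Submodule.mem_sup_left hh) ?_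
      exact Submodule.smul_mem _ _ (Submodule.mem_sup_right
        (Submodule.mem_span_singleton_self x))
    subst ht
    rw [zero_smul, add_zero] at heq
    have hs : s = 0 := by
      by_contra hs
      apply hxH
      have h' : s • x = -h := by
        rw [eq_neg_iff_add_eq_zero, add_comm]; exact heq
      have hx' : x = s⁻¹ • (-h) := by
        rw [← h', smul_smul, inv_mul_cancel₀ hs, one_smul]
      rw [hx']
      exact Submodule.smul_mem _ _ (Submodule.neg_mem _ hh)
    subst hs
    rw [zero_smul, add_zero] at heq
    exact ⟨rfl, rfl, rfl, heq⟩
  -- a nonzero element of H with lam h = 0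
  obtain ⟨h₂, hh₂, hlam2⟩ := hlam
  have hh₂ne : h₂ ≠ 0 := fun e => hlam2 (by rw [e, map_zero])
  have hdimH : 2 ≤ Module.finrank ℂ H := by
    by_contra hc
    push_neg at hc
    have htop : (⊤ : Submodule ℂ L) ≤ H ⊔ Submodule.span ℂ ({x, y, a} : Set L) := by
      intro z _
      obtain ⟨h, hh, s, t, u, rfl⟩ := hspan z
      refine Submodule.add_mem _ (Submodule.add_mem _ (Submodule.add_mem _
        (Submodule.mem_sup_left hh) ?_) ?_) ?_
      · exact Submodule.smul_mem _ _ (Submodule.mem_sup_right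
          (Submodule.subset_span (by simp)))
      · exact Submodule.smul_mem _ _ (Submodule.mem_sup_right
          (Submodule.subset_span (by simp)))
      · exact Submodule.smul_mem _ _ (Submodule.mem_sup_right
          (Submodule.subset_span (by simp)))
    have h1 : Module.finrank ℂ L ≤
        Module.finrank ℂ (H ⊔ Submodule.span ℂ ({x, y, a} : Set L) : Submodule ℂ L) := by
      rw [← finrank_top ℂ L]
      exact Submodule.finrank_mono htop
    have h2 : Module.finrank ℂ (H ⊔ Submodule.span ℂ ({x, y, a} : Set L) : Submodule ℂ L)
        ≤ Module.finrank ℂ H + Module.finrank ℂ (Submodule.span ℂ ({x, y, a} : Set L)) :=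
      Submodule.finrank_add_le_finrank_add_finrank _ _
    have single : ∀ v : L, Module.finrank ℂ (Submodule.span ℂ ({v} : Set L)) ≤ 1 := by
      intro v
      have := finrank_span_le_card (R := ℂ) ({v} : Set L)
      simpa using this
    have h3 : Module.finrank ℂ (Submodule.span ℂ ({x, y, a} : Set L)) ≤ 3 := by
      rw [show ({x, y, a} : Set L) = insert x (insert y {a}) from rfl,
        Submodule.span_insert, Submodule.span_insert]
      refine (Submodule.finrank_add_le_finrank_add_finrank _ _).trans ?_
      have h4 := Submodule.finrank_add_le_finrank_add_finrank
        (Submodule.span ℂ ({y} : Set L)) (Submodule.span ℂ ({a} : Set L))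
      have s1 := single x; have s2 := single y; have s3 := single a
      omega
    omega
  have hker : ∃ h₀ ∈ H, h₀ ≠ 0 ∧ lam h₀ = 0 := by
    by_contra hc
    push_neg at hc
    have hinj : Function.Injective (lam.domRestrict H) := by
      rw [← LinearMap.ker_eq_bot]
      rw [Submodule.eq_bot_iff]
      rintro ⟨v, hv⟩ hmem
      simp only [LinearMap.mem_ker, LinearMap.domRestrict_apply] at hmem
      have := hc v hv
      by_contra hne
      have hvne : v ≠ 0 := fun e => hne (by simp [e])
      exact (this hvne) hmem
    have := LinearMap.finrank_le_finrank_of_injective hinj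
    simp [Module.finrank_self] at this
    omega
  obtain ⟨h₀, hh₀, hh₀ne, hlam0⟩ := hker
  -- Step 1: g = 0
  have hg0 : ∀ h ∈ H, g h = 0 := by
    intro h hh
    have J := hjac y a h
    have t1 : br (br y a) h = -(g h) := by
      rw [hya, map_sub, LinearMap.sub_apply, habH h₁ hh₁ h hh, hyh h hh]
      abel
    have t2 : br (br a h) y = -(g h) := by
      rw [hah h hh, hanti h y, hyh h hh]
    have t3 : br (br h y) a = g h := by
      rw [hanti h y, hyh h hh, map_neg, LinearMap.neg_apply,
        hanti (g h) a, hah (g h) (hg h hh)]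
      abel
    rw [t1, t2, t3, show ω y a = 0 by rw [hskew, hωa, neg_zero],
      hωa h, hωH h hh y, zero_smul, zero_smul, zero_smul] at J
    have e : g h = -(-(g h) + -(g h) + g h) := by abel
    rw [e, J]; simp
  -- coordinates of br x a and br x y
  obtain ⟨h₄, hh₄, c₁, c₂, c₃, hxa⟩ := hspan (br x a)
  obtain ⟨h₃, hh₃, d₂, d₁, d₀, hxy⟩ := hspan (br x y)
  -- Jacobi (x, a, h)
  have key1 : ∀ h ∈ H, c₁ * lam h = 0 ∧ c₁ • f h + c₃ • h - lam h • h₁ = 0 := by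
    intro h hh
    have J := hjac x a h
    have t1 : br (br x a) h = (c₁ * lam h) • y + (c₁ • f h + c₃ • h) := by
      rw [hxa]
      simp only [map_add, map_smul, LinearMap.add_apply, LinearMap.smul_apply]
      rw [habH h₄ hh₄ h hh, hxh h hh, hyh h hh, hg0 h hh, hah h hh]
      module
    have t2 : br (br a h) x = -(lam h • y + f h) := by
      rw [hah h hh, hanti h x, hxh h hh]
    have t3 : br (br h x) a = -(lam h • (h₁ - y)) + f h := by
      rw [hanti h x, hxh h hh, map_neg, LinearMap.neg_apply]
      simp only [map_add, map_smul, LinearMap.add_apply, LinearMap.smul_apply]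
      rw [hya, hanti (f h) a, hah (f h) (hf h hh)]
      module
    rw [t1, t2, t3, show ω x a = 0 by rw [hskew, hωa, neg_zero],
      hωa h, hωH h hh x, zero_smul, zero_smul, zero_smul] at J
    have Jc : (c₁ • f h + c₃ • h - lam h • h₁) + (0:ℂ) • x + (c₁ * lam h) • y
        + (0:ℂ) • a = 0 := by
      have e : (c₁ • f h + c₃ • h - lam h • h₁) + (0:ℂ) • x + (c₁ * lam h) • y
          + (0:ℂ) • a = ((c₁ * lam h) • y + (c₁ • f h + c₃ • h)) + -(lam h • y + f h)
          + (-(lam h • (h₁ - y)) + f h) := by module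
      rw [e, J]; simp
    have hmem : c₁ • f h + c₃ • h - lam h • h₁ ∈ H :=
      Submodule.sub_mem _ (Submodule.add_mem _ (Submodule.smul_mem _ _ (hf h hh))
        (Submodule.smul_mem _ _ hh)) (Submodule.smul_mem _ _ hh₁)
    obtain ⟨_, ht, _, hH0⟩ := indepL _ hmem 0 (c₁ * lam h) 0 Jc
    exact ⟨ht, hH0⟩
  have hc₁ : c₁ = 0 := by
    have := (key1 h₂ hh₂).1
    exact (mul_eq_zero.mp this).resolve_right hlam2
  have hc₃ : c₃ = 0 := by
    have := (key1 h₀ hh₀).2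
    rw [hc₁, hlam0, zero_smul, zero_smul, zero_add, sub_zero] at this
    by_contra hc
    exact hh₀ne (by simpa [hc] using (smul_eq_zero.mp this).resolve_left hc)
  have hh₁0 : h₁ = 0 := by
    have := (key1 h₂ hh₂).2
    rw [hc₁, hc₃, zero_smul, zero_smul, zero_add, zero_sub, neg_eq_zero] at this
    simpa using (smul_eq_zero.mp this).resolve_left hlam2
  -- Jacobi (x, y, h)
  have key2 : ∀ h ∈ H, d₂ * lam h = 0 ∧ d₂ • f h + (d₀ - 1) • h = 0 := by
    intro h hh
    have J := hjac x y h
    have t1 : br (br x y) h = (d₂ * lam h) • y + (d₂ • f h + d₀ • h) := by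
      rw [hxy]
      simp only [map_add, map_smul, LinearMap.add_apply, LinearMap.smul_apply]
      rw [habH h₃ hh₃ h hh, hxh h hh, hyh h hh, hg0 h hh, hah h hh]
      module
    have t2 : br (br y h) x = 0 := by
      rw [hyh h hh, hg0 h hh, map_zero, LinearMap.zero_apply]
    have t3 : br (br h x) y = 0 := by
      rw [hanti h x, hxh h hh, map_neg, LinearMap.neg_apply]
      simp only [map_add, map_smul, LinearMap.add_apply, LinearMap.smul_apply]
      rw [hbrz y, hanti (f h) y, hyh (f h) (hf h hh), hg0 (f h) (hf h hh)]
      simp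
    rw [t1, t2, t3, hωxy, show ω y h = 0 by rw [hskew, hωH h hh y, neg_zero],
      hωH h hh x, one_smul, zero_smul, zero_smul] at J
    have Jc : (d₂ • f h + (d₀ - 1) • h) + (0:ℂ) • x + (d₂ * lam h) • y
        + (0:ℂ) • a = 0 := by
      have e : (d₂ • f h + (d₀ - 1) • h) + (0:ℂ) • x + (d₂ * lam h) • y + (0:ℂ) • a
          = (((d₂ * lam h) • y + (d₂ • f h + d₀ • h)) + 0 + 0) - (h + 0 + 0) := by
        module
      rw [e, J]; abel
    have hmem : d₂ • f h + (d₀ - 1) • h ∈ H :=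
      Submodule.add_mem _ (Submodule.smul_mem _ _ (hf h hh)) (Submodule.smul_mem _ _ hh)
    obtain ⟨_, ht, _, hH0⟩ := indepL _ hmem 0 (d₂ * lam h) 0 Jc
    exact ⟨ht, hH0⟩
  have hd₂ : d₂ = 0 := by
    have := (key2 h₂ hh₂).1
    exact (mul_eq_zero.mp this).resolve_right hlam2
  have hd₀ : d₀ = 1 := by
    have h' := (key2 h₂ hh₂).2
    rw [hd₂, zero_smul, zero_add] at h'
    exact sub_eq_zero.mp ((smul_eq_zero.mp h').resolve_right hh₂ne)
  -- nice forms of brackets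
  have hxa' : br x a = c₂ • y + h₄ := by
    rw [hxa, hc₁, hc₃]; module
  have hxy' : br x y = d₁ • y + a + h₃ := by
    rw [hxy, hd₂, hd₀]; module
  have hya' : br y a = -y := by rw [hya, hh₁0, zero_sub]
  -- the derived subalgebra is proper
  set M : Submodule ℂ L := H ⊔ Submodule.span ℂ {y} ⊔ Submodule.span ℂ {a} with hM
  have hyM : y ∈ M := Submodule.mem_sup_left
    (Submodule.mem_sup_right (Submodule.mem_span_singleton_self y))
  have haM : a ∈ M := Submodule.mem_sup_right (Submodule.mem_span_singleton_self a)
  have hHM : ∀ h ∈ H, h ∈ M := fun h hh =>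
    Submodule.mem_sup_left (Submodule.mem_sup_left hh)
  have bxw : ∀ w : L, br x w ∈ M := by
    intro w
    obtain ⟨h, hh, s, t, u, rfl⟩ := hspan w
    simp only [map_add, map_smul]
    refine Submodule.add_mem _ (Submodule.add_mem _ (Submodule.add_mem _ ?_ ?_) ?_) ?_
    · rw [hxh h hh]
      exact Submodule.add_mem _ (Submodule.smul_mem _ _ hyM) (hHM _ (hf h hh))
    · rw [hbrz x]; simp
    · refine Submodule.smul_mem _ _ ?_
      rw [hxy']
      exact Submodule.add_mem _ (Submodule.add_mem _
        (Submodule.smul_mem _ _ hyM) haM) (hHM _ hh₃)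
    · refine Submodule.smul_mem _ _ ?_
      rw [hxa']
      exact Submodule.add_mem _ (Submodule.smul_mem _ _ hyM) (hHM _ hh₄)
  have byw : ∀ w : L, br y w ∈ M := by
    intro w
    obtain ⟨h, hh, s, t, u, rfl⟩ := hspan w
    simp only [map_add, map_smul]
    refine Submodule.add_mem _ (Submodule.add_mem _ (Submodule.add_mem _ ?_ ?_) ?_) ?_
    · rw [hyh h hh, hg0 h hh]; simp
    · refine Submodule.smul_mem _ _ ?_
      rw [hanti y x, hxy']
      exact Submodule.neg_mem _ (Submodule.add_mem _ (Submodule.add_mem _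
        (Submodule.smul_mem _ _ hyM) haM) (hHM _ hh₃))
    · rw [hbrz y]; simp
    · refine Submodule.smul_mem _ _ ?_
      rw [hya']
      exact Submodule.neg_mem _ hyM
  have baw : ∀ w : L, br a w ∈ M := by
    intro w
    obtain ⟨h, hh, s, t, u, rfl⟩ := hspan w
    simp only [map_add, map_smul]
    refine Submodule.add_mem _ (Submodule.add_mem _ (Submodule.add_mem _ ?_ ?_) ?_) ?_
    · rw [hah h hh]; exact hHM _ hh
    · refine Submodule.smul_mem _ _ ?_
      rw [hanti a x]
      exact Submodule.neg_mem _ (bxw a)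
    · refine Submodule.smul_mem _ _ ?_
      rw [hanti a y]
      exact Submodule.neg_mem _ (byw a)
    · rw [hbrz a]; simp
  have bhw : ∀ h ∈ H, ∀ w : L, br h w ∈ M := by
    intro h hh w
    rw [hanti h w]
    refine Submodule.neg_mem _ ?_
    obtain ⟨h', hh', s, t, u, rfl⟩ := hspan w
    have : br (h' + s • x + t • y + u • a) h
        = br h' h + s • br x h + t • br y h + u • br a h := by
      simp only [map_add, map_smul, LinearMap.add_apply, LinearMap.smul_apply]
    rw [this, habH h' hh' h hh, hxh h hh, hyh h hh, hg0 h hh, hah h hh]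
    refine Submodule.add_mem _ (Submodule.add_mem _ (Submodule.add_mem _ ?_ ?_) ?_) ?_
    · simp
    · exact Submodule.smul_mem _ _ (Submodule.add_mem _
        (Submodule.smul_mem _ _ hyM) (hHM _ (hf h hh)))
    · simp
    · exact Submodule.smul_mem _ _ (hHM _ hh)
  have ball : ∀ u w : L, br u w ∈ M := by
    intro u w
    obtain ⟨h, hh, s, t, v, rfl⟩ := hspan u
    have : br (h + s • x + t • y + v • a) w
        = br h w + s • br x w + t • br y w + v • br a w := by
      simp only [map_add, map_smul, LinearMap.add_apply, LinearMap.smul_apply]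
    rw [this]
    exact Submodule.add_mem _ (Submodule.add_mem _ (Submodule.add_mem _
      (bhw h hh w) (Submodule.smul_mem _ _ (bxw w))) (Submodule.smul_mem _ _ (byw w)))
      (Submodule.smul_mem _ _ (baw w))
  have hxM : x ∉ M := by
    intro hx
    rcases Submodule.mem_sup.mp hx with ⟨p, hp, q, hq, hpq⟩
    rcases Submodule.mem_sup.mp hp with ⟨h, hh, r, hr, hpr⟩
    rcases Submodule.mem_span_singleton.mp hr with ⟨t, rfl⟩
    rcases Submodule.mem_span_singleton.mp hq with ⟨u, rfl⟩
    have heq : h + (-1 : ℂ) • x + t • y + u • a = 0 := by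
      rw [← hpr] at hpq
      rw [← hpq]; module
    have := (indepL h hh _ _ _ heq).1
    norm_num at this
  refine ⟨hh₁0, hg0, fun h hh => by rw [hyh h hh, hg0 h hh],
    ⟨c₂, d₁, h₃, hh₃, h₄, hh₄, hxa', hxy'⟩, ?_⟩
  intro hTop
  have hle : Submodule.span ℂ {z : L | ∃ u w : L, z = br u w} ≤ M := by
    rw [Submodule.span_le]
    rintro z ⟨u, w, rfl⟩
    exact ball u w
  exact hxM (hle (hTop ▸ Submodule.mem_top))
end
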